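/- arXiv:2511.04818 — 4 statements merged into one kernel-verified Lean document; each statement's English description precedes it below -/
import Mathlib

section
/- Let φ : ℝ → ℝ be differentiable and increasing with 0 < φ'(ξ) ≤ C |ξ|^{-(1+2s)} for |ξ| ≥ 1 and φ' bounded. Fix a unit vector e ∈ ℝ^n, d₀ ∈ ℝ with |d₀| ≥ δ > 2ε^{1/2}, and ε ∈ (0,1). Then ∫_{{z : |z| > cδ}} φ'((d₀ + e·z)/ε) |z|^{-(n+2s)} dz ≤ C' ε^s / δ^{4s}, where c > 0 is a fixed constant and C' depends only on n, s, c, and C. -/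
open MeasureTheory Set Module Metric ENNReal

lemma tail_lint {E : Type*} [NormedAddCommGroup E] [NormedSpace ℝ E]
    [MeasurableSpace E] [BorelSpace E] [FiniteDimensional ℝ E] [Nontrivial E]
    (μ : Measure E) [μ.IsAddHaarMeasure] {q r : ℝ}
    (hq : (finrank ℝ E : ℝ) < q) (hr : 0 < r) :
    ∫⁻ y in {y : E | r < ‖y‖}, ENNReal.ofReal (‖y‖ ^ (-q)) ∂μ =
      ENNReal.ofReal ((finrank ℝ E) * (μ (ball 0 1)).toReal *
        (r ^ ((finrank ℝ E : ℝ) - q) / (q - finrank ℝ E))) := by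
  set d := finrank ℝ E with hd
  have hd1 : 1 ≤ d := finrank_pos
  set f : ℝ → ℝ := (Ioi r).indicator (fun ρ => ρ ^ (-q)) with hf
  have hfnn : ∀ ρ, 0 ≤ f ρ := by
    intro ρ
    by_cases h : ρ ∈ Ioi r
    · simp only [hf, indicator_of_mem h]
      exact Real.rpow_nonneg (le_of_lt (lt_trans hr h)) _
    · simp [hf, indicator_of_notMem h]
  -- integrability
  have hK : (0:ℝ) < 1 + r⁻¹ := by positivity
  have hbound : ∀ y : E, ‖f ‖y‖‖ ≤ (1 + r⁻¹) ^ q * (1 + ‖y‖) ^ (-q) := by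
    intro y
    by_cases h : ‖y‖ ∈ Ioi r
    · simp only [hf, indicator_of_mem h]
      rw [Real.norm_eq_abs, abs_of_nonneg (by positivity)]
      have hy : (0:ℝ) < ‖y‖ := lt_trans hr h
      have h1 : (1 + r⁻¹)⁻¹ * (1 + ‖y‖) ≤ ‖y‖ := by
        rw [inv_mul_le_iff₀ hK]
        have h2 : (1:ℝ) ≤ r⁻¹ * ‖y‖ := by
          rw [inv_mul_eq_div, le_div_iff₀ hr, one_mul]
          exact le_of_lt h
        nlinarith [norm_nonneg y]
      calc ‖y‖ ^ (-q) ≤ ((1 + r⁻¹)⁻¹ * (1 + ‖y‖)) ^ (-q) := by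
            apply Real.rpow_le_rpow_of_nonpos (by positivity) h1
            linarith [hq, Nat.cast_nonneg (α := ℝ) d]
        _ = (1 + r⁻¹) ^ q * (1 + ‖y‖) ^ (-q) := by
            rw [Real.mul_rpow (by positivity) (by positivity), Real.inv_rpow hK.le,
              Real.rpow_neg hK.le, inv_inv]
    · simp only [hf, indicator_of_notMem h, norm_zero]
      positivity
  have hmf : Measurable f := by
    apply Measurable.indicator _ measurableSet_Ioi
    fun_prop
  have hint : Integrable (fun y : E => f ‖y‖) μ := by
    apply Integrable.mono' ((integrable_one_add_norm (μ := μ) hq).const_mul ((1 + r⁻¹) ^ q))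
    · exact (hmf.comp measurable_norm).aestronglyMeasurable
    · exact ae_of_all _ hbound
  -- value of the integral
  have hval : ∫ y, f ‖y‖ ∂μ = d * (μ (ball 0 1)).toReal * (r ^ ((d:ℝ) - q) / (q - d)) := by
    rw [integral_fun_norm_addHaar μ f]
    have hinner : ∫ ρ in Ioi (0:ℝ), ρ ^ (d - 1) • f ρ =
        r ^ ((d:ℝ) - q) / (q - (d:ℝ)) := by
      have h1 : ∀ ρ : ℝ, ρ ^ (d - 1) • f ρ =
          (Ioi r).indicator (fun ρ => ρ ^ (d-1) * ρ ^ (-q)) ρ := by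
        intro ρ
        by_cases h : ρ ∈ Ioi r <;>
          simp [hf, indicator_of_mem, indicator_of_notMem, h, smul_eq_mul]
      simp_rw [h1]
      rw [integral_indicator measurableSet_Ioi, Measure.restrict_restrict measurableSet_Ioi,
        Ioi_inter_Ioi, max_eq_left hr.le]
      have h2 : ∀ ρ ∈ Ioi r, ρ ^ (d-1) * ρ ^ (-q) = ρ ^ (((d:ℝ) - 1) + (-q)) := by
        intro ρ hρ
        have hρ0 : (0:ℝ) < ρ := lt_trans hr hρ
        rw [Real.rpow_add hρ0, ← Real.rpow_natCast ρ (d-1)]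
        congr 2
        push_cast [Nat.cast_sub hd1]
        ring
      rw [setIntegral_congr_fun measurableSet_Ioi h2,
        integral_Ioi_rpow_of_lt (by linarith) hr]
      rw [show ((d:ℝ) - 1) + (-q) + 1 = (d:ℝ) - q by ring]
      rw [div_eq_div_iff (by linarith) (by linarith)]
      ring
    rw [hinner, nsmul_eq_mul, smul_eq_mul]
    simp only [measureReal_def, ← hd]
    ring
  -- convert to lintegral
  have hset : MeasurableSet {y : E | r < ‖y‖} := by
    apply measurableSet_lt measurable_const measurable_norm
  rw [← lintegral_indicator hset]
  have : ∀ y : E, {y : E | r < ‖y‖}.indicator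
      (fun y => ENNReal.ofReal (‖y‖ ^ (-q))) y = ENNReal.ofReal (f ‖y‖) := by
    intro y
    by_cases h : y ∈ {y : E | r < ‖y‖}
    · rw [indicator_of_mem h, hf, indicator_of_mem (show ‖y‖ ∈ Ioi r from h)]
    · rw [indicator_of_notMem h, hf, indicator_of_notMem (show ‖y‖ ∉ Ioi r from h),
        ENNReal.ofReal_zero]
  simp_rw [this]
  rw [← ofReal_integral_eq_lintegral_ofReal hint (ae_of_all _ (fun y => hfnn _)), hval]

lemma inner_bound (m : ℕ) (hm : 0 < m) {s r : ℝ} (hs : 0 < s) (hr : 0 < r) (t : ℝ) :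
    ∫⁻ y : EuclideanSpace ℝ (Fin m),
        (if r < Real.sqrt (t^2 + ‖y‖^2) then
          ENNReal.ofReal ((Real.sqrt (t^2 + ‖y‖^2)) ^ (-((m:ℝ)+1+2*s))) else 0)
      ≤ ENNReal.ofReal
          ((volume (ball (0 : EuclideanSpace ℝ (Fin m)) 1)).toReal * (1 + m / (2*s+1))
            * r ^ (-(1+2*s))) := by
  classical
  set Em := EuclideanSpace ℝ (Fin m)
  haveI : Nontrivial Em := by
    apply Module.nontrivial_of_finrank_pos (R := ℝ)
    rw [finrank_euclideanSpace_fin]; exact hm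
  set q : ℝ := (m:ℝ)+1+2*s with hq
  have hmq : (m:ℝ) < q := by rw [hq]; nlinarith
  have hq0 : 0 < q := lt_of_le_of_lt (Nat.cast_nonneg m) hmq
  set vB := (volume (ball (0 : Em) 1)).toReal with hvB
  have hvBnt : volume (ball (0 : Em) 1) ≠ ⊤ := measure_ball_lt_top.ne
  -- pointwise bound
  have hpt : ∀ y : Em,
      (if r < Real.sqrt (t^2 + ‖y‖^2) then
          ENNReal.ofReal ((Real.sqrt (t^2 + ‖y‖^2)) ^ (-q)) else 0)
      ≤ (closedBall (0:Em) r).indicator (fun _ => ENNReal.ofReal (r ^ (-q))) y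
        + {y : Em | r < ‖y‖}.indicator (fun y => ENNReal.ofReal (‖y‖ ^ (-q))) y := by
    intro y
    have hyρ : ‖y‖ ≤ Real.sqrt (t^2 + ‖y‖^2) := by
      have h1 := Real.sq_sqrt (show (0:ℝ) ≤ t^2 + ‖y‖^2 by positivity)
      nlinarith [Real.sqrt_nonneg (t^2 + ‖y‖^2), norm_nonneg y]
    by_cases hyr : ‖y‖ ≤ r
    · have h1 : y ∈ closedBall (0:Em) r := by
        rwa [mem_closedBall, dist_zero_right]
      rw [indicator_of_mem h1]
      by_cases h2 : r < Real.sqrt (t^2 + ‖y‖^2)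
      · rw [if_pos h2]
        have : (Real.sqrt (t^2 + ‖y‖^2)) ^ (-q) ≤ r ^ (-q) :=
          Real.rpow_le_rpow_of_nonpos hr (le_of_lt h2) (by linarith)
        exact le_add_of_le_of_nonneg (ENNReal.ofReal_le_ofReal this) zero_le
      · rw [if_neg h2]
        exact zero_le
    · push_neg at hyr
      have h1 : y ∈ {y : Em | r < ‖y‖} := hyr
      rw [indicator_of_mem h1]
      have h2 : r < Real.sqrt (t^2 + ‖y‖^2) := lt_of_lt_of_le hyr hyρ
      rw [if_pos h2]
      have h3 : (Real.sqrt (t^2 + ‖y‖^2)) ^ (-q) ≤ ‖y‖ ^ (-q) :=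
        Real.rpow_le_rpow_of_nonpos (lt_of_lt_of_le hr hyr.le) hyρ (by linarith)
      exact le_add_of_nonneg_of_le zero_le (ENNReal.ofReal_le_ofReal h3)
  calc ∫⁻ y : Em, (if r < Real.sqrt (t^2 + ‖y‖^2) then
          ENNReal.ofReal ((Real.sqrt (t^2 + ‖y‖^2)) ^ (-q)) else 0)
      ≤ ∫⁻ y : Em, ((closedBall (0:Em) r).indicator (fun _ => ENNReal.ofReal (r ^ (-q))) y
        + {y : Em | r < ‖y‖}.indicator (fun y => ENNReal.ofReal (‖y‖ ^ (-q))) y) :=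
        lintegral_mono hpt
    _ = ENNReal.ofReal (r ^ (-q)) * volume (closedBall (0:Em) r)
        + ∫⁻ y in {y : Em | r < ‖y‖}, ENNReal.ofReal (‖y‖ ^ (-q)) := by
        rw [lintegral_add_left ((measurable_const.indicator measurableSet_closedBall)),
          lintegral_indicator_const measurableSet_closedBall,
          lintegral_indicator (measurableSet_lt measurable_const measurable_norm)]
    _ ≤ ENNReal.ofReal (vB * (1 + m / (2*s+1)) * r ^ (-(1+2*s))) := by
        rw [Measure.addHaar_closedBall _ _ hr.le, tail_lint volume (by
            rw [finrank_euclideanSpace_fin]; exact hmq) hr]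
        rw [finrank_euclideanSpace_fin]
        have hball : volume (ball (0:Em) 1) = ENNReal.ofReal vB :=
          (ENNReal.ofReal_toReal hvBnt).symm
        have hvBnn : 0 ≤ vB := ENNReal.toReal_nonneg
        rw [hball]
        rw [ENNReal.toReal_ofReal hvBnn]
        have c1 : ENNReal.ofReal (r ^ (-q)) * (ENNReal.ofReal (r ^ (m:ℕ)) * ENNReal.ofReal vB)
            = ENNReal.ofReal (r ^ (-q) * (r ^ (m:ℕ) * vB)) := by
          rw [ENNReal.ofReal_mul (Real.rpow_nonneg hr.le _),
            ENNReal.ofReal_mul (pow_nonneg hr.le _)]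
        rw [c1, ← ENNReal.ofReal_add (mul_nonneg (Real.rpow_nonneg hr.le _)
          (mul_nonneg (pow_nonneg hr.le _) hvBnn)) (mul_nonneg
          (mul_nonneg (Nat.cast_nonneg m) hvBnn)
          (div_nonneg (Real.rpow_nonneg hr.le _) (by linarith)))]
        apply ENNReal.ofReal_le_ofReal
        apply le_of_eq
        have e1 : r ^ (-q) * r ^ (m:ℕ) = r ^ (-(1+2*s)) := by
          rw [← Real.rpow_natCast r m, ← Real.rpow_add hr]
          congr 1
          rw [hq]; ring
        have e2 : r ^ ((m:ℝ) - q) = r ^ (-(1+2*s)) := by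
          congr 1; rw [hq]; ring
        have e3 : q - (m:ℝ) = 2*s+1 := by rw [hq]; ring
        rw [e2, e3, ← mul_assoc, e1]
        field_simp

lemma h_lint {s ε : ℝ} (hs : 0 < s) (hε : 0 < ε) :
    ∫⁻ u : ℝ, ENNReal.ofReal (if |u| ≤ ε then 1 else (ε/|u|)^(1+2*s))
      ≤ ENNReal.ofReal ((2 + 1/s) * ε) := by
  have hp : (0:ℝ) < 1 + 2*s := by linarith
  have hpt : ∀ u : ℝ, ENNReal.ofReal (if |u| ≤ ε then 1 else (ε/|u|)^(1+2*s))
      = (Icc (-ε) ε).indicator (fun _ => (1:ℝ≥0∞)) u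
        + {u : ℝ | ε < |u|}.indicator
            (fun u => ENNReal.ofReal (ε^(1+2*s)) * ENNReal.ofReal (|u|^(-(1+2*s)))) u := by
    intro u
    by_cases h : |u| ≤ ε
    · rw [if_pos h, indicator_of_mem (by rw [mem_Icc]; exact abs_le.mp h),
        indicator_of_notMem (by simp only [mem_setOf_eq, not_lt]; exact h),
        ENNReal.ofReal_one, add_zero]
    · push_neg at h
      rw [if_neg (not_le.mpr h), indicator_of_notMem (by
          simp only [mem_Icc, ← abs_le, not_le]; exact h),
        indicator_of_mem (by simpa using h), zero_add,
        ← ENNReal.ofReal_mul (Real.rpow_nonneg hε.le _)]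
      congr 1
      rw [Real.div_rpow hε.le (abs_nonneg u), Real.rpow_neg (abs_nonneg u), div_eq_mul_inv]
  simp_rw [hpt]
  rw [lintegral_add_left (measurable_const.indicator measurableSet_Icc),
    lintegral_indicator_const measurableSet_Icc,
    lintegral_indicator (measurableSet_lt measurable_const measurable_abs),
    lintegral_const_mul _ (by fun_prop)]
  have htail : ∫⁻ u in {u : ℝ | ε < |u|}, ENNReal.ofReal (|u|^(-(1+2*s)))
      = ENNReal.ofReal (2 * (ε ^ (-(2*s)) / (2*s))) := by
    have h1 : {u : ℝ | ε < |u|} = {u : ℝ | ε < ‖u‖} := by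
      simp_rw [Real.norm_eq_abs]
    have h2 : ∀ u : ℝ, ENNReal.ofReal (|u|^(-(1+2*s))) = ENNReal.ofReal (‖u‖^(-(1+2*s))) := by
      intro u; rw [Real.norm_eq_abs]
    simp_rw [h1, h2]
    rw [tail_lint volume (by rw [finrank_self]; push_cast; linarith) hε]
    congr 1
    rw [finrank_self]
    rw [Real.volume_ball]
    push_cast
    rw [ENNReal.toReal_ofReal (by norm_num)]
    ring_nf
  rw [htail, one_mul, Real.volume_Icc, ← ENNReal.ofReal_mul (Real.rpow_nonneg hε.le _)]
  rw [← ENNReal.ofReal_add (by linarith) (by positivity)]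
  apply ENNReal.ofReal_le_ofReal
  have : ε ^ (1+2*s) * (2 * (ε ^ (-(2*s)) / (2*s))) = ε / s := by
    rw [show ε ^ (1+2*s) * (2 * (ε ^ (-(2*s)) / (2*s))) =
      (ε ^ (1+2*s) * ε ^ (-(2*s))) * (2 / (2*s)) by ring, ← Real.rpow_add hε]
    rw [show (1+2*s) + -(2*s) = (1:ℝ) by ring, Real.rpow_one]
    field_simp
  rw [this]
  apply le_of_eq
  field_simp
  ring

lemma exists_mp (m : ℕ) (e : EuclideanSpace ℝ (Fin (m+1))) (he : ‖e‖ = 1) :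
    ∃ Φ : ℝ × EuclideanSpace ℝ (Fin m) → EuclideanSpace ℝ (Fin (m+1)),
      MeasurePreserving Φ ((volume : Measure ℝ).prod (volume : Measure (EuclideanSpace ℝ (Fin m))))
        (volume : Measure (EuclideanSpace ℝ (Fin (m+1)))) ∧
      (∀ p, (inner ℝ e (Φ p) : ℝ) = p.1) ∧
      (∀ p, ‖Φ p‖ = Real.sqrt (p.1^2 + ‖p.2‖^2)) := by
  classical
  set e₀ : EuclideanSpace ℝ (Fin (m+1)) := EuclideanSpace.single (0 : Fin (m+1)) (1:ℝ) with he₀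
  have he₀n : ‖e₀‖ = 1 := by
    rw [he₀, EuclideanSpace.norm_single]; norm_num
  set T : EuclideanSpace ℝ (Fin (m+1)) ≃ₗᵢ[ℝ] EuclideanSpace ℝ (Fin (m+1)) :=
    Submodule.reflection (ℝ ∙ (e - e₀))ᗮ with hTdef
  have hT : T e = e₀ := Submodule.reflection_sub (he.trans he₀n.symm)
  set A := MeasurableEquiv.piFinSuccAbove (fun _ : Fin (m+1) => ℝ) 0 with hA
  set Φ : ℝ × EuclideanSpace ℝ (Fin m) → EuclideanSpace ℝ (Fin (m+1)) := fun p =>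
    T.symm ((MeasurableEquiv.toLp 2 (Fin (m+1) → ℝ))
      (A.symm (p.1, fun j => p.2 j))) with hΦdef
  have hw : ∀ p : ℝ × EuclideanSpace ℝ (Fin m), ∀ i : Fin (m+1),
      ((MeasurableEquiv.toLp 2 (Fin (m+1) → ℝ)) (A.symm (p.1, fun j => p.2 j))) i
        = (A.symm (p.1, fun j => p.2 j)) i := by
    intro p i
    rfl
  have hw0 : ∀ p : ℝ × EuclideanSpace ℝ (Fin m), (A.symm (p.1, fun j => p.2 j)) 0 = p.1 := by
    intro p
    simp [hA, MeasurableEquiv.piFinSuccAbove_symm_apply]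
  have hwj : ∀ p : ℝ × EuclideanSpace ℝ (Fin m), ∀ j : Fin m, (A.symm (p.1, fun j => p.2 j)) j.succ = p.2 j := by
    intro p j
    have : (j.succ : Fin (m+1)) = (0 : Fin (m+1)).succAbove j := by
      rw [Fin.zero_succAbove]
    rw [this]
    simp [hA, MeasurableEquiv.piFinSuccAbove_symm_apply]
  refine ⟨Φ, ?_, ?_, ?_⟩
  · have h1 : MeasurePreserving (Prod.map (id : ℝ → ℝ)
        (MeasurableEquiv.toLp 2 (Fin m → ℝ)).symm)
        ((volume : Measure ℝ).prod (volume : Measure (EuclideanSpace ℝ (Fin m))))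
        ((volume : Measure ℝ).prod (Measure.pi fun _ : Fin m => (volume : Measure ℝ))) :=
      (MeasurePreserving.id volume).prod
        (EuclideanSpace.volume_preserving_symm_measurableEquiv_toLp (Fin m))
    have h2 := (measurePreserving_piFinSuccAbove (fun _ : Fin (m+1) => (volume : Measure ℝ)) 0).symm A
    have h3 := (EuclideanSpace.volume_preserving_symm_measurableEquiv_toLp (Fin (m+1))).symm
    have h4 := T.symm.measurePreserving
    exact h4.comp (h3.comp (h2.comp h1))
  · intro p
    have h5 : (inner ℝ e (Φ p) : ℝ) = (inner ℝ e₀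
        ((MeasurableEquiv.toLp 2 (Fin (m+1) → ℝ)) (A.symm (p.1, fun j => p.2 j))) : ℝ) := by
      rw [hΦdef]
      dsimp only
      rw [← hT, ← T.inner_map_map e _, T.apply_symm_apply]
    rw [h5, he₀, EuclideanSpace.inner_single_left]
    simp only [map_one, one_mul]
    rw [hw, hw0]
  · intro p
    have h6 : ‖Φ p‖ = ‖(MeasurableEquiv.toLp 2 (Fin (m+1) → ℝ))
        (A.symm (p.1, fun j => p.2 j))‖ := T.symm.norm_map _
    rw [h6, EuclideanSpace.norm_eq]
    congr 1
    rw [Fin.sum_univ_succ]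
    congr 1
    · rw [hw, hw0, Real.norm_eq_abs, sq_abs]
    · have : ∀ j : Fin m, ‖((MeasurableEquiv.toLp 2 (Fin (m+1) → ℝ))
          (A.symm (p.1, fun j => p.2 j))) j.succ‖ ^ 2 = ‖p.2 j‖ ^ 2 := by
        intro j
        rw [hw, hwj]
      rw [Finset.sum_congr rfl (fun j _ => this j)]
      have := EuclideanSpace.norm_eq p.2
      rw [this, Real.sq_sqrt]
      positivity

/-- Let φ be differentiable and increasing with 0 < φ' ≤ C|ξ|^{-(1+2s)}
for |ξ| ≥ 1 and φ' bounded. For a unit vector e, |d₀| ≥ δ > 2ε^{1/2}, ε ∈ (0,1),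
∫_{|z|>cδ} φ'((d₀+e·z)/ε) |z|^{-(n+2s)} dz ≤ C' ε^s/δ^{4s},
with C' depending only on n, s, c, C. -/
theorem stmt_6 (n : ℕ) (hn : 2 ≤ n) (s : ℝ) (hs : s ∈ Set.Ioo (0 : ℝ) (1/2))
    (c C : ℝ) (hc : 0 < c) (hC : 0 < C) :
    ∃ C' : ℝ, 0 < C' ∧
      ∀ (φ φ' : ℝ → ℝ),
        (∀ ξ, HasDerivAt φ (φ' ξ) ξ) →
        (∀ ξ, 0 < φ' ξ) → (∀ ξ, φ' ξ ≤ C) →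
        (∀ ξ : ℝ, 1 ≤ |ξ| → φ' ξ ≤ C * |ξ| ^ (-(1 + 2*s))) →
        ∀ (e : EuclideanSpace ℝ (Fin n)), ‖e‖ = 1 →
        ∀ (d₀ δ ε : ℝ), 0 < δ → δ ≤ |d₀| → 2 * Real.sqrt ε < δ → ε ∈ Set.Ioo (0:ℝ) 1 →
          (∫ z in {z : EuclideanSpace ℝ (Fin n) | c * δ < ‖z‖},
              φ' ((d₀ + (inner ℝ e z : ℝ)) / ε) * ‖z‖ ^ (-((n : ℝ) + 2*s)))
            ≤ C' * ε ^ s / δ ^ (4*s) := by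
  obtain ⟨hs0, hs12⟩ := hs
  obtain ⟨m, rfl⟩ : ∃ m, n = m + 1 := ⟨n - 1, by omega⟩
  have hm : 0 < m := by omega
  set κ : ℝ := (volume (ball (0 : EuclideanSpace ℝ (Fin m)) 1)).toReal * (1 + m / (2*s+1))
    with hκ
  have hκ0 : 0 ≤ κ := by
    apply mul_nonneg ENNReal.toReal_nonneg
    have : (0:ℝ) ≤ (m:ℝ) / (2*s+1) := by positivity
    linarith
  set C' : ℝ := C * (2 + 1/s) * κ * c ^ (-(1+2*s)) + 1 with hC'
  have hC'0 : 0 < C' := by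
    have h1 : (0:ℝ) ≤ C * (2 + 1/s) * κ * c ^ (-(1+2*s)) := by
      apply mul_nonneg
      apply mul_nonneg
      · apply mul_nonneg hC.le
        have : (0:ℝ) < 1/s := by positivity
        linarith
      · exact hκ0
      · exact (Real.rpow_pos_of_pos hc _).le
    rw [hC']
    linarith
  refine ⟨C', hC'0, ?_⟩
  intro φ φ' hderiv hpos hbdd hdecay e he d₀ δ ε hδ hd₀ hεδ hεmem
  obtain ⟨hε0, hε1⟩ := hεmem
  set qx : ℝ := (m:ℝ) + 1 + 2*s with hqx
  have hqx0 : 0 < qx := by rw [hqx]; positivity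
  set r : ℝ := c * δ with hrdef
  have hr : 0 < r := mul_pos hc hδ
  -- measurability of φ'
  have hφ'm : Measurable φ' := by
    have : φ' = deriv φ := funext fun ξ => ((hderiv ξ).deriv).symm
    rw [this]; exact measurable_deriv φ
  have hinnerm : Measurable fun z : EuclideanSpace ℝ (Fin (m+1)) => (inner ℝ e z : ℝ) :=
    (continuous_const.inner continuous_id).measurable
  -- the 1d profile g
  set g : ℝ → ℝ := fun u => if |u| ≤ ε then 1 else (ε/|u|)^(1+2*s) with hgdef
  have hgm : Measurable g := by
    apply Measurable.ite (measurableSet_le measurable_abs measurable_const)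
      measurable_const
    fun_prop
  have hgnn : ∀ u, 0 ≤ g u := by
    intro u
    rw [hgdef]
    dsimp only
    split
    · norm_num
    · positivity
  -- pointwise bound on φ'
  have hφbound : ∀ u : ℝ, φ' (u / ε) ≤ C * g u := by
    intro u
    rw [hgdef]
    dsimp only
    split
    · rw [mul_one]; exact hbdd _
    · rename_i habs
      push_neg at habs
      have hu0 : 0 < |u| := lt_trans hε0 habs
      have h1 : 1 ≤ |u / ε| := by
        rw [abs_div, abs_of_pos hε0, le_div_iff₀ hε0, one_mul]
        exact habs.le
      have h2 := hdecay (u/ε) h1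
      have h3 : |u / ε| ^ (-(1+2*s)) = (ε/|u|) ^ (1+2*s) := by
        rw [abs_div, abs_of_pos hε0, Real.rpow_neg (by positivity),
          Real.div_rpow (abs_nonneg u) hε0.le, Real.div_rpow hε0.le (abs_nonneg u)]
        rw [inv_div]
      rw [← h3]
      exact h2
  -- the main function H
  set W : ℝ → ℝ≥0∞ := fun ρ => if r < ρ then ENNReal.ofReal (ρ ^ (-qx)) else 0 with hWdef
  have hWm : Measurable W := by
    apply Measurable.ite (measurableSet_lt measurable_const measurable_id)
    · fun_prop
    · exact measurable_const
  set H : EuclideanSpace ℝ (Fin (m+1)) → ℝ≥0∞ :=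
    fun z => ENNReal.ofReal (C * g (d₀ + (inner ℝ e z : ℝ))) * W ‖z‖ with hHdef
  have hHm : Measurable H := by
    apply Measurable.mul
    · apply Measurable.ennreal_ofReal
      exact (hgm.comp (measurable_const.add hinnerm)).const_mul C
    · exact hWm.comp measurable_norm
  -- the set S
  set S : Set (EuclideanSpace ℝ (Fin (m+1))) := {z | r < ‖z‖} with hSdef
  have hS : MeasurableSet S := measurableSet_lt measurable_const measurable_norm
  -- the integrand f
  set f : EuclideanSpace ℝ (Fin (m+1)) → ℝ :=
    fun z => φ' ((d₀ + (inner ℝ e z : ℝ)) / ε) * ‖z‖ ^ (-(((m:ℝ)+1) + 2*s)) with hfdef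
  have hexp : ∀ z : EuclideanSpace ℝ (Fin (m+1)),
      φ' ((d₀ + (inner ℝ e z : ℝ)) / ε) * ‖z‖ ^ (-(((m+1:ℕ):ℝ) + 2*s)) = f z := by
    intro z
    rw [hfdef]
    norm_num
  have hfm : Measurable f := by
    apply Measurable.mul
    · exact hφ'm.comp ((measurable_const.add hinnerm).div_const ε)
    · fun_prop
  have hfnn : ∀ z, 0 ≤ f z := by
    intro z
    exact mul_nonneg (hpos _).le (Real.rpow_nonneg (norm_nonneg _) _)
  -- rewrite goal
  simp_rw [hexp]
  rw [integral_eq_lintegral_of_nonneg_ae (ae_of_all _ hfnn)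
    (hfm.aestronglyMeasurable.restrict)]
  apply ENNReal.toReal_le_of_le_ofReal (by positivity)
  -- key chain
  have hq_exp : -(((m:ℝ)+1) + 2*s) = -qx := by rw [hqx]
  -- step 1
  have step1 : ∫⁻ z in S, ENNReal.ofReal (f z) ≤ ∫⁻ z, H z := by
    rw [← lintegral_indicator hS]
    apply lintegral_mono
    intro z
    by_cases hz : z ∈ S
    · rw [indicator_of_mem hz, hfdef]
      dsimp only
      rw [ENNReal.ofReal_mul (hpos _).le, hHdef]
      dsimp only
      have hzS : r < ‖z‖ := hz
      rw [hWdef]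
      dsimp only
      rw [if_pos hzS, hq_exp]
      exact mul_le_mul' (ENNReal.ofReal_le_ofReal (hφbound _)) le_rfl
    · rw [indicator_of_notMem hz]
      exact zero_le
  -- step 2: change of variables
  obtain ⟨Φ, hΦ, hΦ1, hΦ2⟩ := exists_mp m e he
  have step2 : ∫⁻ z, H z =
      ∫⁻ p, H (Φ p) ∂((volume : Measure ℝ).prod
        (volume : Measure (EuclideanSpace ℝ (Fin m)))) := (hΦ.lintegral_comp hHm).symm
  have hHΦ : ∀ p : ℝ × EuclideanSpace ℝ (Fin m), H (Φ p) =
      ENNReal.ofReal (C * g (d₀ + p.1)) * W (Real.sqrt (p.1^2 + ‖p.2‖^2)) := by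
    intro p
    rw [hHdef]
    dsimp only
    rw [hΦ1 p, hΦ2 p]
  have step3 : ∫⁻ p, H (Φ p) ∂((volume : Measure ℝ).prod
        (volume : Measure (EuclideanSpace ℝ (Fin m)))) =
      ∫⁻ t, ENNReal.ofReal (C * g (d₀ + t)) *
        ∫⁻ y : EuclideanSpace ℝ (Fin m), W (Real.sqrt (t^2 + ‖y‖^2)) := by
    simp_rw [hHΦ]
    rw [lintegral_prod _ (by
      apply Measurable.aemeasurable
      apply Measurable.mul
      · apply Measurable.ennreal_ofReal
        exact (hgm.comp (measurable_const.add measurable_fst)).const_mul C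
      · exact hWm.comp (Real.continuous_sqrt.measurable.comp
          ((measurable_fst.pow_const 2).add ((measurable_norm.comp measurable_snd).pow_const 2))))]
    dsimp only
    refine lintegral_congr fun t => ?_
    rw [lintegral_const_mul _ (show Measurable fun y : EuclideanSpace ℝ (Fin m) =>
      W (Real.sqrt (t^2 + ‖y‖^2)) from hWm.comp (Real.continuous_sqrt.measurable.comp
      ((measurable_const.pow_const 2).add (measurable_norm.pow_const 2))))]
  -- step 4: inner bound
  have hKin := fun t => inner_bound m hm hs0 hr t
  have step4 : (∫⁻ t, ENNReal.ofReal (C * g (d₀ + t)) *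
        ∫⁻ y : EuclideanSpace ℝ (Fin m), W (Real.sqrt (t^2 + ‖y‖^2)))
      ≤ (∫⁻ t, ENNReal.ofReal (C * g (d₀ + t))) * ENNReal.ofReal (κ * r ^ (-(1+2*s))) := by
    rw [← lintegral_mul_const _ (by
      apply Measurable.ennreal_ofReal
      exact (hgm.comp (measurable_const.add measurable_id)).const_mul C)]
    apply lintegral_mono
    intro t
    apply mul_le_mul' le_rfl
    rw [hWdef, hκ]
    simp_rw [hqx]
    exact hKin t
  -- step 5: 1d integral
  have step5 : (∫⁻ t, ENNReal.ofReal (C * g (d₀ + t)))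
      ≤ ENNReal.ofReal C * ENNReal.ofReal ((2 + 1/s) * ε) := by
    have ht : (∫⁻ t, ENNReal.ofReal (C * g (d₀ + t)))
        = ∫⁻ u, ENNReal.ofReal (C * g u) :=
      lintegral_add_left_eq_self (fun u => ENNReal.ofReal (C * g u)) d₀
    rw [ht]
    have : ∀ u : ℝ, ENNReal.ofReal (C * g u) = ENNReal.ofReal C * ENNReal.ofReal (g u) := by
      intro u
      rw [ENNReal.ofReal_mul hC.le]
    simp_rw [this]
    rw [lintegral_const_mul _ (hgm.ennreal_ofReal)]
    exact mul_le_mul' le_rfl (h_lint hs0 hε0)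
  -- combine
  calc ∫⁻ z in S, ENNReal.ofReal (f z)
      ≤ ∫⁻ z, H z := step1
    _ = _ := step2
    _ = _ := step3
    _ ≤ (∫⁻ t, ENNReal.ofReal (C * g (d₀ + t))) * ENNReal.ofReal (κ * r ^ (-(1+2*s))) := step4
    _ ≤ (ENNReal.ofReal C * ENNReal.ofReal ((2 + 1/s) * ε)) * ENNReal.ofReal (κ * r ^ (-(1+2*s))) :=
        mul_le_mul' step5 le_rfl
    _ ≤ ENNReal.ofReal (C' * ε ^ s / δ ^ (4*s)) := by
        rw [← ENNReal.ofReal_mul hC.le, ← ENNReal.ofReal_mul (by positivity)]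
        apply ENNReal.ofReal_le_ofReal
        -- real arithmetic
        have hsqδ : Real.sqrt ε ≤ δ := by
          have h0 := Real.sqrt_nonneg ε
          nlinarith
        have hsq1 : Real.sqrt ε ≤ 1 := by
          rw [show (1:ℝ) = Real.sqrt 1 by simp]
          exact Real.sqrt_le_sqrt hε1.le
        have hsqpos : 0 < Real.sqrt ε := Real.sqrt_pos.mpr hε0
        have key : ε * δ ^ (-(1+2*s)) ≤ ε ^ s * δ ^ (-(4*s)) := by
          have h1 : ε ^ ((1:ℝ)-s) ≤ δ ^ ((1:ℝ)-2*s) := by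
            have e1 : ε ^ ((1:ℝ)-s) = (Real.sqrt ε) ^ ((1:ℝ)-2*s) * Real.sqrt ε := by
              rw [Real.sqrt_eq_rpow, ← Real.rpow_mul hε0.le, ← Real.rpow_add hε0]
              congr 1
              ring
            rw [e1]
            calc (Real.sqrt ε) ^ ((1:ℝ)-2*s) * Real.sqrt ε
                ≤ δ ^ ((1:ℝ)-2*s) * 1 :=
                  mul_le_mul (Real.rpow_le_rpow (Real.sqrt_nonneg ε) hsqδ (by linarith))
                    hsq1 hsqpos.le (Real.rpow_nonneg hδ.le _)
              _ = δ ^ ((1:ℝ)-2*s) := mul_one _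
          calc ε * δ ^ (-(1+2*s)) = ε ^ s * (ε ^ ((1:ℝ)-s) * δ ^ (-(1+2*s))) := by
                rw [← mul_assoc, ← Real.rpow_add hε0,
                  show s + ((1:ℝ)-s) = 1 by ring, Real.rpow_one]
            _ ≤ ε ^ s * (δ ^ ((1:ℝ)-2*s) * δ ^ (-(1+2*s))) := by
                apply mul_le_mul_of_nonneg_left _ (Real.rpow_nonneg hε0.le s)
                apply mul_le_mul_of_nonneg_right h1 (Real.rpow_nonneg hδ.le _)
            _ = ε ^ s * δ ^ (-(4*s)) := by
                rw [← Real.rpow_add hδ, show (1:ℝ)-2*s + -(1+2*s) = -(4*s) by ring]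
        have hrpow : r ^ (-(1+2*s)) = c ^ (-(1+2*s)) * δ ^ (-(1+2*s)) := by
          rw [hrdef, Real.mul_rpow hc.le hδ.le]
        calc C * ((2 + 1/s) * ε) * (κ * r ^ (-(1+2*s)))
            = (C * (2 + 1/s) * κ * c ^ (-(1+2*s))) * (ε * δ ^ (-(1+2*s))) := by
              rw [hrpow]; ring
          _ ≤ (C * (2 + 1/s) * κ * c ^ (-(1+2*s))) * (ε ^ s * δ ^ (-(4*s))) := by
              apply mul_le_mul_of_nonneg_left key
              apply mul_nonneg (mul_nonneg (mul_nonneg hC.le (by positivity)) hκ0)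
                (Real.rpow_pos_of_pos hc _).le
          _ ≤ C' * ε ^ s / δ ^ (4*s) := by
              have hXnn : (0:ℝ) ≤ ε ^ s * δ ^ (-(4*s)) :=
                mul_nonneg (Real.rpow_nonneg hε0.le _) (Real.rpow_nonneg hδ.le _)
              have hAC : C * (2 + 1/s) * κ * c ^ (-(1+2*s)) ≤ C' := by
                rw [hC']; linarith
              calc (C * (2 + 1/s) * κ * c ^ (-(1+2*s))) * (ε ^ s * δ ^ (-(4*s)))
                  ≤ C' * (ε ^ s * δ ^ (-(4*s))) := mul_le_mul_of_nonneg_right hAC hXnn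
                _ = C' * ε ^ s / δ ^ (4*s) := by
                    rw [Real.rpow_neg hδ.le, div_eq_mul_inv]; ring
end

section
/- Let Ω ⊂ ℝ^n be a bounded open set with C² boundary and let d be its signed distance function (positive inside Ω), smooth on the tubular neighborhood {|d| < 2ρ}. Then for every x with |d(x)| < ρ, the two integrals κ⁺[x,d] = ∫_{{d(x+z) > d(x), ∇d(x)·z < 0}} |z|^{-(n+2s)} dz and κ⁻[x,d] = ∫_{{d(x+z) < d(x), ∇d(x)·z > 0}} |z|^{-(n+2s)} dz are finite. -/
open MeasureTheory Set Classical

/-- The signed distance function to a set Ω (positive inside, negative outside),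
measured from the topological boundary. -/
noncomputable def signedDistOld {E : Type*} [MetricSpace E] (Ω : Set E) (x : E) : ℝ :=
  if x ∈ Ω then Metric.infDist x (frontier Ω) else -Metric.infDist x (frontier Ω)

lemma slab_vol (n : ℕ) (hn : 1 ≤ n) (u : EuclideanSpace ℝ (Fin n)) (hu : ‖u‖ = 1)
    (δ R : ℝ) (hδ : 0 ≤ δ) (hR : 0 ≤ R) :
    volume {z : EuclideanSpace ℝ (Fin n) | |(inner ℝ u z : ℝ)| ≤ δ ∧ ‖z‖ ≤ R} ≤
      ENNReal.ofReal (2*δ) * ENNReal.ofReal (2*R) ^ (n - 1) := by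
  set i0 : Fin n := ⟨0, hn⟩
  have horth : Orthonormal ℝ (({i0} : Set (Fin n)).restrict (fun _ => u)) := by
    constructor
    · intro i; exact hu
    · intro i j hij
      exfalso
      exact hij (Subtype.ext (i.2.trans j.2.symm))
  obtain ⟨b, hb⟩ := horth.exists_orthonormalBasis_extension_of_card_eq
    (by simp [finrank_euclideanSpace_fin])
  have hb0 : b i0 = u := hb i0 rfl
  set c : Fin n → ℝ := fun i => if i = i0 then δ else R with hc
  set B : Set (Fin n → ℝ) := Set.pi univ (fun i => Icc (-(c i)) (c i)) with hB
  have hBmeas : MeasurableSet B := MeasurableSet.univ_pi (fun i => measurableSet_Icc)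
  set T : EuclideanSpace ℝ (Fin n) → (Fin n → ℝ) :=
    (MeasurableEquiv.toLp 2 (Fin n → ℝ)).symm ∘ b.repr with hT
  have hTmp : MeasurePreserving T :=
    (EuclideanSpace.volume_preserving_symm_measurableEquiv_toLp (Fin n)).comp b.measurePreserving_repr
  have hsub : {z : EuclideanSpace ℝ (Fin n) | |(inner ℝ u z : ℝ)| ≤ δ ∧ ‖z‖ ≤ R} ⊆ T ⁻¹' B := by
    intro z hz
    intro i _
    have hTi : T z i = (inner (𝕜 := ℝ) (b i) z : ℝ) := b.repr_apply_apply z i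
    rw [mem_Icc, ← abs_le, hTi]
    by_cases h : i = i0
    · subst h; rw [hb0]; simpa [c] using hz.1
    · simp only [c, if_neg h]
      calc |(inner (𝕜 := ℝ) (b i) z : ℝ)| ≤ ‖b i‖ * ‖z‖ := abs_real_inner_le_norm _ _
        _ ≤ 1 * R := by
            rw [b.orthonormal.1 i, one_mul]; exact hz.2.trans (by rw [one_mul])
        _ = R := one_mul R
  calc volume {z : EuclideanSpace ℝ (Fin n) | |(inner ℝ u z : ℝ)| ≤ δ ∧ ‖z‖ ≤ R}
      ≤ volume (T ⁻¹' B) := measure_mono hsub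
    _ = volume B := hTmp.measure_preimage hBmeas.nullMeasurableSet
    _ = ∏ i, volume (Icc (-(c i)) (c i)) := volume_pi_pi _
    _ = ∏ i, ENNReal.ofReal (2 * c i) := by
        refine Finset.prod_congr rfl fun i _ => ?_
        rw [Real.volume_Icc]; congr 1; ring
    _ = ENNReal.ofReal (2*δ) * ENNReal.ofReal (2*R) ^ (n - 1) := by
        rw [← Finset.mul_prod_erase Finset.univ _ (Finset.mem_univ i0)]
        congr 1
        · simp only [c]
          have h : ∀ i ∈ Finset.univ.erase i0,
              ENNReal.ofReal (2 * if i = i0 then δ else R) = ENNReal.ofReal (2*R) :=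
            fun i hi => by rw [if_neg (Finset.ne_of_mem_erase hi)]
          refine (Finset.prod_congr rfl h).trans ?_
          rw [Finset.prod_const,
            Finset.card_erase_of_mem (Finset.mem_univ i0), Finset.card_univ, Fintype.card_fin]

lemma near_integrable (n : ℕ) (hn : 1 ≤ n) (u : EuclideanSpace ℝ (Fin n)) (hu : ‖u‖ = 1)
    (C r s : ℝ) (hC : 0 ≤ C) (hr : 0 < r) (hs0 : 0 < s) (hs2 : s < 1/2) :
    IntegrableOn (fun z : EuclideanSpace ℝ (Fin n) => ‖z‖ ^ (-((n : ℝ) + 2*s)))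
      {z : EuclideanSpace ℝ (Fin n) | |(inner ℝ u z : ℝ)| ≤ C * ‖z‖^2 ∧ ‖z‖ ≤ r} := by
  classical
  set p : ℝ := (n : ℝ) + 2*s with hp
  have hppos : 0 < p := by positivity
  have hfm : Measurable fun z : EuclideanSpace ℝ (Fin n) => ‖z‖ ^ (-p) := by fun_prop
  refine ⟨hfm.aestronglyMeasurable.restrict, ?_⟩
  rw [hasFiniteIntegral_iff_ofReal (Filter.Eventually.of_forall fun z =>
    Real.rpow_nonneg (norm_nonneg z) _)]
  -- dyadic radii
  set a : ℕ → ℝ := fun k => r * (1/2 : ℝ)^k with ha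
  have hapos : ∀ k, 0 < a k := fun k => by positivity
  set A : ℕ → Set (EuclideanSpace ℝ (Fin n)) := fun k =>
    {z | |(inner ℝ u z : ℝ)| ≤ C * ‖z‖^2 ∧ a (k+1) < ‖z‖ ∧ ‖z‖ ≤ a k} with hA
  have hcont : Continuous fun z : EuclideanSpace ℝ (Fin n) => (inner ℝ u z : ℝ) :=
    continuous_const.inner continuous_id
  have hAm : ∀ k, MeasurableSet (A k) := by
    intro k
    exact ((isClosed_le hcont.abs (continuous_const.mul (continuous_norm.pow 2))).measurableSet).inter
      (((isOpen_lt continuous_const continuous_norm).measurableSet).inter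
        ((isClosed_le continuous_norm continuous_const).measurableSet))
  have hcover : {z : EuclideanSpace ℝ (Fin n) | |(inner ℝ u z : ℝ)| ≤ C * ‖z‖^2 ∧ ‖z‖ ≤ r}
      ⊆ {0} ∪ ⋃ k, A k := by
    intro z hz
    by_cases h0 : z = 0
    · exact Or.inl h0
    · right
      have hz0 : 0 < ‖z‖ := norm_pos_iff.mpr h0
      have hex : ∃ k, a (k+1) < ‖z‖ := by
        obtain ⟨N, hN⟩ := exists_pow_lt_of_lt_one (div_pos hz0 hr) (by norm_num : (1/2 : ℝ) < 1)
        refine ⟨N, ?_⟩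
        have h1 : r * (1/2 : ℝ)^(N+1) ≤ r * (1/2 : ℝ)^N := by
          apply mul_le_mul_of_nonneg_left _ hr.le
          exact pow_le_pow_of_le_one (by norm_num) (by norm_num) (Nat.le_succ N)
        have h2 : r * (1/2 : ℝ)^N < ‖z‖ := by
          rw [mul_comm, ← lt_div_iff₀ hr]; exact hN
        exact lt_of_le_of_lt h1 h2
      refine mem_iUnion.mpr ⟨Nat.find hex, hz.1, Nat.find_spec hex, ?_⟩
      rcases Nat.eq_zero_or_pos (Nat.find hex) with h | h
      · rw [h]; simpa [a] using hz.2
      · obtain ⟨m, hm⟩ := Nat.exists_eq_succ_of_ne_zero (Nat.pos_iff_ne_zero.mp h)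
        rw [hm]
        have := Nat.find_min hex (by omega : m < Nat.find hex)
        exact le_of_not_gt this
  -- geometric data
  set q : ℝ := (1/2 : ℝ) ^ (1 - 2*s) with hq
  have hq0 : 0 ≤ q := Real.rpow_nonneg (by norm_num) _
  have hq1 : q < 1 := Real.rpow_lt_one (by norm_num) (by norm_num) (by linarith)
  set D : ℝ := (r/2) ^ (-p) * (2*(C*r^2)) * (2*r)^(n-1) with hD
  set g : ℕ → ℝ := fun k => (a (k+1)) ^ (-p) * ((2*(C*(a k)^2)) * (2*(a k))^(n-1)) with hg
  have hgnn : ∀ k, 0 ≤ g k := fun k => by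
    have := hapos k; have := hapos (k+1)
    have h1 : (0:ℝ) ≤ (a (k+1)) ^ (-p) := Real.rpow_nonneg (hapos (k+1)).le _
    positivity
  have hgeq : ∀ k, g k = D * q ^ k := by
    intro k
    have ht : (0:ℝ) < (1/2 : ℝ)^k := by positivity
    have e1 : a (k+1) = (r/2) * (1/2 : ℝ)^k := by
      simp only [ha, pow_succ]; ring
    have e2 : (a (k+1)) ^ (-p) = (r/2) ^ (-p) * ((1/2 : ℝ)^k) ^ (-p) := by
      rw [e1, Real.mul_rpow (by positivity) ht.le]
    have e3 : 2*(a k) = (2*r) * (1/2 : ℝ)^k := by simp only [ha]; ring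
    have e4 : (2*(a k))^(n-1) = (2*r)^(n-1) * ((1/2 : ℝ)^k)^(n-1) := by
      rw [e3, mul_pow]
    have e5 : 2*(C*(a k)^2) = (2*(C*r^2)) * ((1/2 : ℝ)^k)^2 := by
      simp only [ha]; ring
    simp only [hg]
    rw [e2, e4, e5]
    have e6 : ((1/2 : ℝ)^k) ^ (-p) * (((1/2 : ℝ)^k)^2 * ((1/2 : ℝ)^k)^(n-1)) = q ^ k := by
      rw [← pow_add]
      have hn1 : 2 + (n-1) = n + 1 := by omega
      rw [hn1]
      rw [← Real.rpow_natCast ((1/2 : ℝ)^k) (n+1), ← Real.rpow_add ht]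
      have e7 : -p + ((n:ℕ)+1 : ℕ) = 1 - 2*s := by push_cast [hp]; ring
      rw [e7]
      rw [← Real.rpow_natCast ((1/2:ℝ)) k, ← Real.rpow_mul (by norm_num), mul_comm (k:ℝ),
        Real.rpow_mul (by norm_num), Real.rpow_natCast]
    calc (r/2) ^ (-p) * ((1/2 : ℝ)^k) ^ (-p) *
          ((2*(C*r^2)) * ((1/2 : ℝ)^k)^2 * ((2*r)^(n-1) * ((1/2 : ℝ)^k)^(n-1)))
        = D * (((1/2 : ℝ)^k) ^ (-p) * (((1/2 : ℝ)^k)^2 * ((1/2 : ℝ)^k)^(n-1))) := by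
          rw [hD]; ring
      _ = D * q ^ k := by rw [e6]
  have hgsum : Summable g := by
    refine Summable.congr ((summable_geometric_of_lt_one hq0 hq1).mul_left D) fun k => ?_
    exact (hgeq k).symm
  -- main estimate
  have hAk : ∀ k, ∫⁻ z in A k, ENNReal.ofReal (‖z‖ ^ (-p)) ≤ ENNReal.ofReal (g k) := by
    intro k
    have hconst : ∫⁻ z in A k, ENNReal.ofReal (‖z‖ ^ (-p)) ≤
        ∫⁻ _ in A k, ENNReal.ofReal ((a (k+1)) ^ (-p)) := by
      refine setLIntegral_mono' (hAm k) fun z hz => ?_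
      exact ENNReal.ofReal_le_ofReal
        (Real.rpow_le_rpow_of_nonpos (hapos (k+1)) hz.2.1.le (by linarith))
    rw [setLIntegral_const] at hconst
    have hvol : volume (A k) ≤ ENNReal.ofReal (2*(C*(a k)^2)) * ENNReal.ofReal (2*(a k)) ^ (n-1) := by
      refine le_trans (measure_mono ?_) (slab_vol n hn u hu (C*(a k)^2) (a k)
        (by positivity) (hapos k).le)
      intro z hz
      refine ⟨le_trans hz.1 ?_, hz.2.2⟩
      have : ‖z‖^2 ≤ (a k)^2 := by
        apply pow_le_pow_left₀ (norm_nonneg z) hz.2.2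
      nlinarith [hz.2.2, norm_nonneg z, hapos k]
    calc ∫⁻ z in A k, ENNReal.ofReal (‖z‖ ^ (-p))
        ≤ ENNReal.ofReal ((a (k+1)) ^ (-p)) * volume (A k) := hconst
      _ ≤ ENNReal.ofReal ((a (k+1)) ^ (-p)) *
          (ENNReal.ofReal (2*(C*(a k)^2)) * ENNReal.ofReal (2*(a k)) ^ (n-1)) :=
            mul_le_mul_right hvol _
      _ = ENNReal.ofReal (g k) := by
          simp only [hg]
          rw [← ENNReal.ofReal_pow (by positivity), ← ENNReal.ofReal_mul (by positivity),
            ← ENNReal.ofReal_mul (Real.rpow_nonneg (hapos (k+1)).le _)]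
  haveI : Nontrivial (EuclideanSpace ℝ (Fin n)) :=
    Module.nontrivial_of_finrank_pos (R := ℝ)
      (by rw [finrank_euclideanSpace_fin]; omega)
  calc ∫⁻ z in {z : EuclideanSpace ℝ (Fin n) | |(inner ℝ u z : ℝ)| ≤ C * ‖z‖^2 ∧ ‖z‖ ≤ r},
        ENNReal.ofReal (‖z‖ ^ (-p))
      ≤ ∫⁻ z in ({0} ∪ ⋃ k, A k), ENNReal.ofReal (‖z‖ ^ (-p)) := lintegral_mono_set hcover
    _ ≤ (∫⁻ z in ({0} : Set (EuclideanSpace ℝ (Fin n))), ENNReal.ofReal (‖z‖ ^ (-p))) +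
        ∫⁻ z in ⋃ k, A k, ENNReal.ofReal (‖z‖ ^ (-p)) := lintegral_union_le _ _ _
    _ ≤ 0 + ∑' k, ∫⁻ z in A k, ENNReal.ofReal (‖z‖ ^ (-p)) := by
        gcongr
        · rw [setLIntegral_measure_zero _ _ (measure_singleton 0)]
        · exact lintegral_iUnion_le _ _
    _ ≤ 0 + ∑' k, ENNReal.ofReal (g k) := by
        gcongr
        exact hAk _
    _ = ENNReal.ofReal (∑' k, g k) := by
        rw [zero_add, ENNReal.ofReal_tsum_of_nonneg hgnn hgsum]
    _ < ⊤ := ENNReal.ofReal_lt_top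

lemma outer_integrable (n : ℕ) (r₀ : ℝ) (hr : 0 < r₀) (p : ℝ) (hp : (n : ℝ) < p) :
    IntegrableOn (fun z : EuclideanSpace ℝ (Fin n) => ‖z‖ ^ (-p))
      {z : EuclideanSpace ℝ (Fin n) | r₀ ≤ ‖z‖} := by
  have hppos : 0 < p := lt_of_le_of_lt (Nat.cast_nonneg n) hp
  have hmeas : MeasurableSet {z : EuclideanSpace ℝ (Fin n) | r₀ ≤ ‖z‖} :=
    (isClosed_le continuous_const continuous_norm).measurableSet
  have hint : Integrable (fun z : EuclideanSpace ℝ (Fin n) =>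
      (1 + 1/r₀)^p * (1 + ‖z‖) ^ (-p)) :=
    (integrable_one_add_norm (by rw [finrank_euclideanSpace_fin]; exact hp)).const_mul _
  refine Integrable.mono' hint.integrableOn ?_ ?_
  · exact (Measurable.aestronglyMeasurable (by fun_prop)).restrict
  · rw [ae_restrict_iff' hmeas]
    refine Filter.Eventually.of_forall fun z hz => ?_
    have hz0 : 0 < ‖z‖ := lt_of_lt_of_le hr hz
    have hb : (0:ℝ) < 1 + 1/r₀ := by positivity
    have key : (1 + ‖z‖)^p ≤ (1 + 1/r₀)^p * ‖z‖^p := by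
      rw [← Real.mul_rpow hb.le (norm_nonneg z)]
      apply Real.rpow_le_rpow (by positivity) _ hppos.le
      have : 1 ≤ ‖z‖ / r₀ := (one_le_div hr).mpr hz
      calc 1 + ‖z‖ ≤ ‖z‖/r₀ + ‖z‖ := by linarith
        _ = (1 + 1/r₀) * ‖z‖ := by field_simp; ring
    rw [Real.norm_of_nonneg (Real.rpow_nonneg (norm_nonneg z) _)]
    rw [Real.rpow_neg (norm_nonneg z), Real.rpow_neg (by positivity)]
    have h1 : (0:ℝ) < ‖z‖^p := Real.rpow_pos_of_pos hz0 p
    have h2 : (0:ℝ) < (1+‖z‖)^p := Real.rpow_pos_of_pos (by positivity) p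
    have h3 : (0:ℝ) < (1+1/r₀)^p := Real.rpow_pos_of_pos hb p
    rw [← div_eq_mul_inv, le_div_iff₀ h2, inv_mul_le_iff₀ h1]
    nlinarith [key]

/-- Let Ω ⊂ ℝ^n be bounded open with C² boundary and d its signed
distance function, smooth (C²) on the tubular neighborhood {|d| < 2ρ}. Then for every
x with |d(x)| < ρ, the integrals
κ⁺[x,d] = ∫_{{d(x+z)>d(x), ∇d(x)·z<0}} |z|^{-(n+2s)} dz and
κ⁻[x,d] = ∫_{{d(x+z)<d(x), ∇d(x)·z>0}} |z|^{-(n+2s)} dz are finite. -/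
theorem stmt_11 (n : ℕ) (hn : 2 ≤ n) (s : ℝ) (hs : s ∈ Set.Ioo (0 : ℝ) (1/2))
    (Ω : Set (EuclideanSpace ℝ (Fin n))) (hopen : IsOpen Ω) (hbdd : Bornology.IsBounded Ω)
    (ρ : ℝ) (hρ : 0 < ρ)
    (hsmooth : ContDiffOn ℝ 2 (signedDistOld Ω)
      {x : EuclideanSpace ℝ (Fin n) | |signedDistOld Ω x| < 2*ρ})
    (x : EuclideanSpace ℝ (Fin n)) (hx : |signedDistOld Ω x| < ρ) :
    IntegrableOn (fun z : EuclideanSpace ℝ (Fin n) => ‖z‖ ^ (-((n : ℝ) + 2*s)))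
      {z : EuclideanSpace ℝ (Fin n) |
        signedDistOld Ω x < signedDistOld Ω (x + z) ∧
        (inner ℝ (gradient (signedDistOld Ω) x) z : ℝ) < 0} ∧
    IntegrableOn (fun z : EuclideanSpace ℝ (Fin n) => ‖z‖ ^ (-((n : ℝ) + 2*s)))
      {z : EuclideanSpace ℝ (Fin n) |
        signedDistOld Ω (x + z) < signedDistOld Ω x ∧
        0 < (inner ℝ (gradient (signedDistOld Ω) x) z : ℝ)} := by
  obtain ⟨hs0, hs2⟩ := hs
  set d := signedDistOld Ω with hd
  set U : Set (EuclideanSpace ℝ (Fin n)) := {y | |d y| < 2*ρ} with hU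
  have habs : ∀ y, |d y| = Metric.infDist y (frontier Ω) := by
    intro y
    by_cases h : y ∈ Ω <;>
      simp [hd, signedDistOld, h, abs_of_nonneg Metric.infDist_nonneg]
  have hUopen : IsOpen U := by
    have : U = (fun y => Metric.infDist y (frontier Ω)) ⁻¹' Iio (2*ρ) := by
      ext y; simp [hU, habs y]
    rw [this]
    exact isOpen_Iio.preimage (Metric.continuous_infDist_pt _)
  have hxU : x ∈ U := by
    simp only [hU, mem_setOf_eq]; linarith
  have hd2 : ContDiffAt ℝ 2 d x := hsmooth.contDiffAt (hUopen.mem_nhds hxU)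
  have hd1' : ContDiffAt ℝ 1 (fderiv ℝ d) x := hd2.fderiv_right (by norm_num)
  obtain ⟨K, t, ht, hlip⟩ := hd1'.exists_lipschitzOnWith
  obtain ⟨r₀, hr₀, hball⟩ : ∃ r₀ > 0, Metric.closedBall x r₀ ⊆ t ∩ U := by
    have hmem : t ∩ U ∈ nhds x := Filter.inter_mem ht (hUopen.mem_nhds hxU)
    exact Metric.nhds_basis_closedBall.mem_iff.mp hmem
  set ν : EuclideanSpace ℝ (Fin n) := gradient d x with hν
  have hinner : ∀ z, (inner ℝ ν z : ℝ) = fderiv ℝ d x z := fun z =>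
    InnerProductSpace.toDual_symm_apply
  -- Taylor estimate
  have htay : ∀ z : EuclideanSpace ℝ (Fin n), ‖z‖ ≤ r₀ →
      |d (x + z) - d x - (inner ℝ ν z : ℝ)| ≤ K * ‖z‖ * ‖z‖ := by
    intro z hz
    have hsub : Metric.closedBall x ‖z‖ ⊆ t ∩ U :=
      (Metric.closedBall_subset_closedBall hz).trans hball
    have hder : ∀ y ∈ Metric.closedBall x ‖z‖,
        HasFDerivWithinAt d (fderiv ℝ d y) (Metric.closedBall x ‖z‖) y := by
      intro y hy
      exact (((hsmooth.contDiffAt (hUopen.mem_nhds (hsub hy).2)).differentiableAt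
        (by norm_num)).hasFDerivAt).hasFDerivWithinAt
    have hbound : ∀ y ∈ Metric.closedBall x ‖z‖,
        ‖fderiv ℝ d y - fderiv ℝ d x‖ ≤ (K : ℝ) * ‖z‖ := by
      intro y hy
      have h1 : dist (fderiv ℝ d y) (fderiv ℝ d x) ≤ (K : ℝ) * dist y x :=
        hlip.dist_le_mul y (hsub hy).1 x
          (hsub (Metric.mem_closedBall_self (norm_nonneg z))).1
      rw [dist_eq_norm] at h1
      refine h1.trans ?_
      exact mul_le_mul_of_nonneg_left (Metric.mem_closedBall.mp hy) K.2
    have hmem1 : x ∈ Metric.closedBall x ‖z‖ := Metric.mem_closedBall_self (norm_nonneg z)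
    have hmem2 : x + z ∈ Metric.closedBall x ‖z‖ := by
      rw [Metric.mem_closedBall]
      simp [dist_eq_norm]
    have := Convex.norm_image_sub_le_of_norm_hasFDerivWithin_le' hder hbound
      (convex_closedBall x ‖z‖) hmem1 hmem2
    rw [add_sub_cancel_left] at this
    rw [hinner z, ← Real.norm_eq_abs]
    exact this
  by_cases hν0 : ν = 0
  · constructor
    · have : {z : EuclideanSpace ℝ (Fin n) | d x < d (x + z) ∧ (inner ℝ ν z : ℝ) < 0} = ∅ := by
        ext z; simp [hν0, inner_zero_left]
      rw [this]; exact integrableOn_empty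
    · have : {z : EuclideanSpace ℝ (Fin n) | d (x + z) < d x ∧ 0 < (inner ℝ ν z : ℝ)} = ∅ := by
        ext z; simp [hν0, inner_zero_left]
      rw [this]; exact integrableOn_empty
  · have hνpos : 0 < ‖ν‖ := norm_pos_iff.mpr hν0
    set u : EuclideanSpace ℝ (Fin n) := (‖ν‖⁻¹ : ℝ) • ν with hu'
    have hu : ‖u‖ = 1 := norm_smul_inv_norm hν0
    have hCnn : (0:ℝ) ≤ K / ‖ν‖ := by positivity
    have hnear := near_integrable n (by omega) u hu (K / ‖ν‖) r₀ s hCnn hr₀ hs0 hs2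
    have houter := outer_integrable n r₀ hr₀ ((n : ℝ) + 2*s) (by linarith)
    have hinner_u : ∀ z, (inner ℝ u z : ℝ) = ‖ν‖⁻¹ * (inner ℝ ν z : ℝ) := fun z => by
      rw [hu', real_inner_smul_left]
    have hkey : ∀ z : EuclideanSpace ℝ (Fin n), |(inner ℝ ν z : ℝ)| ≤ K * ‖z‖^2 →
        |(inner ℝ u z : ℝ)| ≤ (K / ‖ν‖) * ‖z‖^2 := by
      intro z h
      rw [hinner_u, abs_mul, abs_of_nonneg (inv_nonneg.mpr hνpos.le), div_eq_mul_inv,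
        mul_comm (K:ℝ) ‖ν‖⁻¹, mul_assoc]
      exact mul_le_mul_of_nonneg_left h (inv_nonneg.mpr hνpos.le)
    constructor
    · refine (hnear.union houter).mono_set ?_
      rintro z ⟨hz1, hz2⟩
      by_cases hzr : ‖z‖ ≤ r₀
      · left
        refine ⟨hkey z ?_, hzr⟩
        have h1 := htay z hzr
        rw [abs_le] at h1
        have : |(inner ℝ ν z : ℝ)| = -(inner ℝ ν z : ℝ) := abs_of_neg hz2
        rw [this]
        nlinarith [h1.1, h1.2, hz1]
      · right
        exact le_of_not_ge hzr
    · refine (hnear.union houter).mono_set ?_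
      rintro z ⟨hz1, hz2⟩
      by_cases hzr : ‖z‖ ≤ r₀
      · left
        refine ⟨hkey z ?_, hzr⟩
        have h1 := htay z hzr
        rw [abs_le] at h1
        have : |(inner ℝ ν z : ℝ)| = (inner ℝ ν z : ℝ) := abs_of_pos hz2
        rw [this]
        nlinarith [h1.1, h1.2, hz1]
      · right
        exact le_of_not_ge hzr
end

section
/- Let φ : ℝ → ℝ be increasing, bounded with φ(−∞)=0, φ(+∞)=1, with |φ(ξ) − H(ξ)| ≤ C₀|ξ|^{-2s} for |ξ| ≥ 1, and let d : ℝ^n → ℝ be 1-Lipschitz. Fix x with d(x) ≥ ρ > 0 and suppose |d(x+z) − d(x) − ∇d(x)·z| ≤ C₀|z|², |∇d(x)| ≤ 1, and |φ'| ≤ C₀ with |φ'(ξ)| ≤ C₀|ξ|^{-(1+2s)} for |ξ| ≥ 1. If c > 0 is small enough that |z| ≤ cρ implies |d(x+z)−d(x)| ≤ ρ/4 and |∇d(x)·z| ≤ ρ/4, then |∫_{{|z|<cρ}} (φ(d(x+z)/ε) − φ((d(x)+∇d(x)·z)/ε)) |z|^{-(n+2s)} dz| ≤ C ρ^{1−4s}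 ε^{2s} for all ε ∈ (0,1), with C depending only on n, s, C₀, c. -/
open MeasureTheory Set Filter Topology
open ENNReal
set_option maxHeartbeats 1000000


lemma lint_ball_rpow (n : ℕ) (hn : 1 ≤ n) (q R : ℝ) (hq : q < 0) (hnq : 0 < (n:ℝ) + q)
    (hR : 0 < R) :
    ∫⁻ z in {z : EuclideanSpace ℝ (Fin n) | ‖z‖ < R}, ENNReal.ofReal (‖z‖ ^ q) ≤
      ENNReal.ofReal (R ^ ((n:ℝ) + q) * (2 ^ ((n:ℝ) - q) *
        (volume (Metric.ball (0 : EuclideanSpace ℝ (Fin n)) 1)).toReal *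
        (1 - 2 ^ (-((n:ℝ) + q)))⁻¹)) := by
  classical
  haveI : Nonempty (Fin n) := ⟨⟨0, hn⟩⟩
  haveI : Nontrivial (EuclideanSpace ℝ (Fin n)) := by infer_instance
  set E := EuclideanSpace ℝ (Fin n)
  have hfr : Module.finrank ℝ E = n := finrank_euclideanSpace_fin
  set B : ℝ≥0∞ := volume (Metric.ball (0 : E) 1) with hBdef
  have hBlt : B < ⊤ := measure_ball_lt_top
  set A : ℕ → Set E := fun k => Metric.closedBall 0 (R/2^k) \ Metric.ball 0 (R/2^(k+1)) with hA
  -- covering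
  have hcover : {z : E | ‖z‖ < R} ⊆ {0} ∪ ⋃ k, A k := by
    intro z hz
    rcases eq_or_ne z 0 with rfl | hz0
    · exact Or.inl rfl
    have hzpos : 0 < ‖z‖ := norm_pos_iff.2 hz0
    have ht : 1 < R / ‖z‖ := (one_lt_div hzpos).2 hz
    have hPex : ∃ m : ℕ, R / ‖z‖ < 2 ^ m := pow_unbounded_of_one_lt _ one_lt_two
    have hm0 : R / ‖z‖ < 2 ^ (Nat.find hPex) := Nat.find_spec hPex
    have hm0ne : Nat.find hPex ≠ 0 := by
      intro h
      rw [h] at hm0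
      simp only [pow_zero] at hm0
      linarith
    obtain ⟨k, hk⟩ := Nat.exists_eq_succ_of_ne_zero hm0ne
    have hklt : ¬ (R / ‖z‖ < 2 ^ k) := Nat.find_min hPex (by omega)
    push_neg at hklt
    rw [hk] at hm0
    refine Or.inr (Set.mem_iUnion.2 ⟨k, ?_, ?_⟩)
    · rw [Metric.mem_closedBall, dist_zero_right, le_div_iff₀ (by positivity)]
      have := (le_div_iff₀ hzpos).1 hklt
      linarith
    · rw [Metric.mem_ball, dist_zero_right]
      push_neg
      rw [div_le_iff₀ (by positivity)]
      have := (div_lt_iff₀ hzpos).1 hm0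
      rw [pow_succ] at this ⊢
      nlinarith
  -- termwise bound
  set D : ℝ := R ^ ((n:ℝ) + q) * 2 ^ ((n:ℝ) - q) with hD
  set r0 : ℝ := 2 ^ (-((n:ℝ) + q)) with hr0
  have hr0pos : 0 < r0 := Real.rpow_pos_of_pos two_pos _
  have hr0lt : r0 < 1 := Real.rpow_lt_one_of_one_lt_of_neg one_lt_two (by linarith)
  have hDpos : 0 < D := by positivity
  have hw : ∀ k : ℕ, (R/2^(k+1)) ^ q * (2*(R/2^k)) ^ n = D * r0 ^ k := by
    intro k
    have hexp : ∀ a b : ℝ, 0 < a → 0 < b → Real.log a = Real.log b → a = b := fun a b ha hb h =>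
      by rw [← Real.exp_log ha, ← Real.exp_log hb, h]
    apply hexp _ _ (by positivity) (by positivity)
    rw [Real.log_mul (by positivity) (by positivity),
      Real.log_rpow (by positivity), Real.log_div hR.ne' (by positivity),
      Real.log_pow, Real.log_pow, Real.log_mul two_ne_zero (by positivity),
      Real.log_div hR.ne' (by positivity), Real.log_pow,
      Real.log_mul (by positivity) (by positivity), Real.log_pow,
      hD, hr0, Real.log_mul (by positivity) (by positivity),
      Real.log_rpow hR, Real.log_rpow two_pos, Real.log_rpow two_pos]
    push_cast
    ring
  -- main chain
  have hterm : ∀ k : ℕ, ∫⁻ z in A k, ENNReal.ofReal (‖z‖ ^ q) ≤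
      ENNReal.ofReal (D * r0 ^ k) * B := by
    intro k
    have hstep : ∫⁻ z in A k, ENNReal.ofReal (‖z‖ ^ q) ≤
        ∫⁻ _ in A k, ENNReal.ofReal ((R/2^(k+1)) ^ q) := by
      apply setLIntegral_mono measurable_const
      intro z hz
      apply ENNReal.ofReal_le_ofReal
      apply Real.rpow_le_rpow_of_nonpos (by positivity) _ hq.le
      have := hz.2
      rw [Metric.mem_ball, dist_zero_right] at this
      push_neg at this
      exact this
    refine hstep.trans ?_
    rw [setLIntegral_const]
    have hsub : A k ⊆ Metric.ball (0:E) (2*(R/2^k)) := by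
      intro z hz
      have := hz.1
      rw [Metric.mem_closedBall, dist_zero_right] at this
      rw [Metric.mem_ball, dist_zero_right]
      have : (0:ℝ) < R/2^k := by positivity
      linarith [hz.1, (Metric.mem_closedBall.1 hz.1)]
    have hvol : volume (A k) ≤ ENNReal.ofReal ((2*(R/2^k)) ^ n) * B := by
      refine (measure_mono hsub).trans ?_
      rw [Measure.addHaar_ball _ _ (by positivity : (0:ℝ) ≤ 2*(R/2^k)), hfr]
    calc ENNReal.ofReal ((R/2^(k+1)) ^ q) * volume (A k)
        ≤ ENNReal.ofReal ((R/2^(k+1)) ^ q) * (ENNReal.ofReal ((2*(R/2^k)) ^ n) * B) :=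
          mul_le_mul_right hvol _
      _ = ENNReal.ofReal (D * r0 ^ k) * B := by
          rw [← mul_assoc, ← ENNReal.ofReal_mul (by positivity), hw k]
  calc ∫⁻ z in {z : E | ‖z‖ < R}, ENNReal.ofReal (‖z‖ ^ q)
      ≤ ∫⁻ z in ({0} ∪ ⋃ k, A k : Set E), ENNReal.ofReal (‖z‖ ^ q) :=
        lintegral_mono_set hcover
    _ ≤ (∫⁻ z in ({0} : Set E), ENNReal.ofReal (‖z‖ ^ q)) +
        ∫⁻ z in (⋃ k, A k), ENNReal.ofReal (‖z‖ ^ q) := lintegral_union_le _ _ _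
    _ = ∫⁻ z in (⋃ k, A k), ENNReal.ofReal (‖z‖ ^ q) := by
        rw [lintegral_singleton, measure_singleton, mul_zero, zero_add]
    _ ≤ ∑' k, ∫⁻ z in A k, ENNReal.ofReal (‖z‖ ^ q) := lintegral_iUnion_le _ _
    _ ≤ ∑' k, ENNReal.ofReal (D * r0 ^ k) * B := ENNReal.tsum_le_tsum hterm
    _ ≤ ENNReal.ofReal (R ^ ((n:ℝ) + q) * (2 ^ ((n:ℝ) - q) * B.toReal *
          (1 - 2 ^ (-((n:ℝ) + q)))⁻¹)) := by
        have h1 : ∀ k : ℕ, ENNReal.ofReal (D * r0 ^ k) * B =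
            (ENNReal.ofReal D * B) * (ENNReal.ofReal r0) ^ k := by
          intro k
          rw [ENNReal.ofReal_mul hDpos.le, ENNReal.ofReal_pow hr0pos.le]
          ring
        simp_rw [h1]
        rw [ENNReal.tsum_mul_left, ENNReal.tsum_geometric]
        have h2 : (1 - ENNReal.ofReal r0)⁻¹ = ENNReal.ofReal ((1 - r0)⁻¹) := by
          rw [← ENNReal.ofReal_one, ← ENNReal.ofReal_sub _ hr0pos.le,
            ENNReal.ofReal_inv_of_pos (by linarith)]
        rw [h2]
        have hBo : B = ENNReal.ofReal B.toReal := (ENNReal.ofReal_toReal hBlt.ne).symm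
        conv_lhs => rw [hBo]
        rw [← ENNReal.ofReal_mul hDpos.le, ← ENNReal.ofReal_mul (by positivity)]
        apply ENNReal.ofReal_le_ofReal
        rw [hD, hr0]
        have hBt : (0:ℝ) ≤ B.toReal := ENNReal.toReal_nonneg
        nlinarith [Real.rpow_pos_of_pos hR ((n:ℝ)+q), Real.rpow_pos_of_pos two_pos ((n:ℝ)-q),
          inv_nonneg.2 (by linarith : (0:ℝ) ≤ 1 - 2 ^ (-((n:ℝ) + q)))]

/-- The Heaviside function: 0 for ξ < 0, 1 for ξ ≥ 0. -/
noncomputable def heaviside (ξ : ℝ) : ℝ := if 0 ≤ ξ then 1 else 0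

/-- Near-field estimate far from the front. Under the stated hypotheses
on the phase transition φ and the 1-Lipschitz function d with d(x) ≥ ρ > 0,
|∫_{|z|<cρ} (φ(d(x+z)/ε) − φ((d(x)+∇d(x)·z)/ε)) |z|^{-(n+2s)} dz| ≤ C ρ^{1−4s} ε^{2s}
for all ε ∈ (0,1), with C depending only on n, s, C₀, c. -/
theorem stmt_16 (n : ℕ) (hn : 2 ≤ n) (s : ℝ) (hs : s ∈ Set.Ioo (0 : ℝ) (1/2))
    (C₀ c : ℝ) (hC₀ : 0 < C₀) (hc : 0 < c) :
    ∃ C : ℝ, 0 < C ∧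
      ∀ (φ φ' : ℝ → ℝ) (d : EuclideanSpace ℝ (Fin n) → ℝ)
        (x : EuclideanSpace ℝ (Fin n)) (ρ : ℝ),
        Monotone φ → Tendsto φ atBot (𝓝 0) → Tendsto φ atTop (𝓝 1) →
        (∀ ξ : ℝ, 1 ≤ |ξ| → |φ ξ - heaviside ξ| ≤ C₀ * |ξ| ^ (-(2*s))) →
        (∀ ξ, HasDerivAt φ (φ' ξ) ξ) →
        (∀ ξ, |φ' ξ| ≤ C₀) →
        (∀ ξ : ℝ, 1 ≤ |ξ| → |φ' ξ| ≤ C₀ * |ξ| ^ (-(1 + 2*s))) →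
        LipschitzWith 1 d → 0 < ρ → ρ ≤ d x → ‖gradient d x‖ ≤ 1 →
        (∀ z : EuclideanSpace ℝ (Fin n),
          |d (x + z) - d x - (inner ℝ (gradient d x) z : ℝ)| ≤ C₀ * ‖z‖^2) →
        (∀ z : EuclideanSpace ℝ (Fin n), ‖z‖ ≤ c * ρ →
          |d (x + z) - d x| ≤ ρ/4 ∧ |(inner ℝ (gradient d x) z : ℝ)| ≤ ρ/4) →
        ∀ ε : ℝ, ε ∈ Set.Ioo (0:ℝ) 1 →
          |∫ z in {z : EuclideanSpace ℝ (Fin n) | ‖z‖ < c * ρ},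
              (φ (d (x + z) / ε) - φ ((d x + (inner ℝ (gradient d x) z : ℝ)) / ε))
                * ‖z‖ ^ (-((n : ℝ) + 2*s))|
            ≤ C * ρ ^ (1 - 4*s) * ε ^ (2*s) := by
  obtain ⟨hs0, hs2⟩ := hs
  have hn2 : (2:ℝ) ≤ (n:ℝ) := by exact_mod_cast hn
  set Vb := (volume (Metric.ball (0 : EuclideanSpace ℝ (Fin n)) 1)).toReal with hVbdef
  set q : ℝ := 2 - ((n:ℝ) + 2*s) with hqdef
  have hq : q < 0 := by rw [hqdef]; linarith
  have hnqe : (n:ℝ) + q = 2 - 2*s := by rw [hqdef]; ring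
  have hnq : (0:ℝ) < (n:ℝ) + q := by rw [hnqe]; linarith
  have hVb : 0 < Vb := ENNReal.toReal_pos (Metric.measure_ball_pos _ _ one_pos).ne'
    measure_ball_lt_top.ne
  have hr0lt : (2:ℝ) ^ (-((n:ℝ) + q)) < 1 :=
    Real.rpow_lt_one_of_one_lt_of_neg one_lt_two (by linarith)
  have hT : 0 < 2 ^ ((n:ℝ) - q) * Vb * (1 - 2 ^ (-((n:ℝ) + q)))⁻¹ := by
    apply mul_pos (mul_pos (Real.rpow_pos_of_pos two_pos _) hVb)
    exact inv_pos.2 (by linarith)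
  refine ⟨C₀^2 * 2 ^ ((1:ℝ)+2*s) * (c ^ ((n:ℝ)+q) *
      (2 ^ ((n:ℝ) - q) * Vb * (1 - 2 ^ (-((n:ℝ) + q)))⁻¹)), ?_, ?_⟩
  · exact mul_pos (mul_pos (pow_pos hC₀ 2) (Real.rpow_pos_of_pos two_pos _))
      (mul_pos (Real.rpow_pos_of_pos hc _) hT)
  intro φ φ' d x ρ hmono hbot htop hdec hderiv hbdd hdec' hlip hρ hρd hgrad hquad hsmall ε hε
  obtain ⟨hε0, hε1⟩ := hε
  set R := c * ρ with hRdef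
  have hRpos : 0 < R := mul_pos hc hρ
  set M : ℝ := C₀ * (2*ε/ρ) ^ ((1:ℝ)+2*s) with hM
  have hMpos : 0 < M := by
    rw [hM]; exact mul_pos hC₀ (Real.rpow_pos_of_pos (by positivity) _)
  set A : ℝ := C₀^2 * 2 ^ ((1:ℝ)+2*s) * (ε ^ (2*s) * ρ ^ (-((1:ℝ)+2*s))) with hA
  have hApos : 0 < A := by
    rw [hA]
    exact mul_pos (mul_pos (pow_pos hC₀ 2) (Real.rpow_pos_of_pos two_pos _))
      (mul_pos (Real.rpow_pos_of_pos hε0 _) (Real.rpow_pos_of_pos hρ _))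
  have hρε : 0 < ρ/(2*ε) := by positivity
  -- derivative bound on the half line
  have hMbd : ∀ ξ ∈ Set.Ici (ρ/(2*ε)), ‖φ' ξ‖ ≤ M := by
    intro ξ hξ
    rw [Set.mem_Ici] at hξ
    rw [Real.norm_eq_abs]
    by_cases h1 : 1 ≤ ξ
    · have habs : |ξ| = ξ := abs_of_pos (by linarith)
      have hb := hdec' ξ (by rwa [habs])
      rw [habs] at hb
      refine hb.trans ?_
      rw [hM]
      have hinv : (2*ε/ρ) = (ρ/(2*ε))⁻¹ := (inv_div _ _).symm
      rw [hinv, Real.inv_rpow hρε.le, ← Real.rpow_neg hρε.le]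
      exact mul_le_mul_of_nonneg_left
        (Real.rpow_le_rpow_of_nonpos hρε hξ (by linarith)) hC₀.le
    · push_neg at h1
      have hlt : ρ/(2*ε) < 1 := lt_of_le_of_lt hξ h1
      have hρ2ε : ρ < 2*ε := by rwa [div_lt_one (by linarith)] at hlt
      have hone : (1:ℝ) ≤ (2*ε/ρ) ^ ((1:ℝ)+2*s) :=
        Real.one_le_rpow ((one_le_div hρ).2 hρ2ε.le) (by linarith)
      calc |φ' ξ| ≤ C₀ := hbdd ξ
        _ = C₀ * 1 := (mul_one C₀).symm
        _ ≤ M := by rw [hM]; exact mul_le_mul_of_nonneg_left hone hC₀.le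
  -- pointwise bound
  have hpt : ∀ z ∈ {z : EuclideanSpace ℝ (Fin n) | ‖z‖ < R},
      ‖(φ (d (x + z) / ε) - φ ((d x + (inner ℝ (gradient d x) z : ℝ)) / ε))
        * ‖z‖ ^ (-((n : ℝ) + 2*s))‖ ≤ A * ‖z‖ ^ q := by
    intro z hz
    rw [Set.mem_setOf_eq] at hz
    rcases eq_or_ne z 0 with rfl | hz0
    · rw [norm_zero, Real.zero_rpow (by intro h; nlinarith : -((n:ℝ) + 2*s) ≠ 0),
        Real.zero_rpow (by intro h; nlinarith : q ≠ 0), mul_zero, norm_zero, mul_zero]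
    · have hzn : 0 < ‖z‖ := norm_pos_iff.2 hz0
      obtain ⟨hd1, hd2⟩ := hsmall z hz.le
      have h34 : ρ/2 ≤ d (x + z) := by
        have h' := abs_le.1 hd1
        linarith [h'.1, h'.2]
      have hu : d (x + z) / ε ∈ Set.Ici (ρ/(2*ε)) := by
        rw [Set.mem_Ici, div_le_div_iff₀ (by positivity) hε0]
        linarith [mul_le_mul_of_nonneg_right h34 hε0.le]
      have h34' : ρ/2 ≤ d x + (inner ℝ (gradient d x) z : ℝ) := by
        have h' := abs_le.1 hd2
        linarith [h'.1, h'.2]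
      have hv : (d x + (inner ℝ (gradient d x) z : ℝ)) / ε ∈ Set.Ici (ρ/(2*ε)) := by
        rw [Set.mem_Ici, div_le_div_iff₀ (by positivity) hε0]
        linarith [mul_le_mul_of_nonneg_right h34' hε0.le]
      have hmvt := Convex.norm_image_sub_le_of_norm_hasDerivWithin_le
        (fun ξ _ => (hderiv ξ).hasDerivWithinAt) hMbd (convex_Ici _) hv hu
      have hdiff : ‖d (x + z) / ε - (d x + (inner ℝ (gradient d x) z : ℝ)) / ε‖
          ≤ C₀ * ‖z‖^2 / ε := by
        rw [div_sub_div_same, Real.norm_eq_abs, abs_div, abs_of_pos hε0]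
        have heq : d (x + z) - (d x + (inner ℝ (gradient d x) z : ℝ))
            = d (x + z) - d x - (inner ℝ (gradient d x) z : ℝ) := by ring
        rw [heq]
        exact (div_le_div_iff_of_pos_right hε0).2 (hquad z)
      rw [norm_mul]
      have hrn : ‖(‖z‖ ^ (-((n:ℝ) + 2*s)) : ℝ)‖ = ‖z‖ ^ (-((n:ℝ) + 2*s)) := by
        rw [Real.norm_eq_abs, abs_of_nonneg (Real.rpow_nonneg (norm_nonneg z) _)]
      rw [hrn]
      have hstep : ‖φ (d (x + z) / ε) - φ ((d x + (inner ℝ (gradient d x) z : ℝ)) / ε)‖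
          ≤ M * (C₀ * ‖z‖^2 / ε) :=
        hmvt.trans (mul_le_mul_of_nonneg_left hdiff hMpos.le)
      refine le_trans (mul_le_mul_of_nonneg_right hstep
        (Real.rpow_nonneg (norm_nonneg z) _)) (le_of_eq ?_)
      have e3 : (‖z‖:ℝ)^(2:ℕ) * ‖z‖ ^ (-((n:ℝ)+2*s)) = ‖z‖ ^ q := by
        rw [← Real.rpow_natCast ‖z‖ 2, ← Real.rpow_add hzn, hqdef]
        congr 1
      have e4 : M * (C₀ * ‖z‖^2 / ε) * ‖z‖ ^ (-((n:ℝ)+2*s))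
          = (M * C₀ / ε) * ((‖z‖:ℝ)^(2:ℕ) * ‖z‖ ^ (-((n:ℝ)+2*s))) := by ring
      have e1 : (2*ε/ρ) ^ ((1:ℝ)+2*s)
          = 2 ^ ((1:ℝ)+2*s) * (ε * ε^(2*s)) * (ρ ^ ((1:ℝ)+2*s))⁻¹ := by
        rw [Real.div_rpow (by positivity) hρ.le, Real.mul_rpow (by norm_num) hε0.le,
          Real.rpow_add hε0, Real.rpow_one, div_eq_mul_inv]
      have e5 : M * C₀ / ε = A := by
        rw [hM, hA, e1, Real.rpow_neg hρ.le]
        field_simp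
      rw [e4, e3, e5]
  -- assemble
  rw [← Real.norm_eq_abs]
  refine (norm_integral_le_lintegral_norm _).trans ?_
  have hCρε : (0:ℝ) ≤ C₀^2 * 2 ^ ((1:ℝ)+2*s) * (c ^ ((n:ℝ)+q) *
      (2 ^ ((n:ℝ) - q) * Vb * (1 - 2 ^ (-((n:ℝ) + q)))⁻¹)) * ρ ^ (1 - 4*s) * ε ^ (2*s) := by
    have := hT
    positivity
  apply ENNReal.toReal_le_of_le_ofReal hCρε
  have hmeas : MeasurableSet {z : EuclideanSpace ℝ (Fin n) | ‖z‖ < R} := by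
    have : {z : EuclideanSpace ℝ (Fin n) | ‖z‖ < R} = Metric.ball 0 R := by
      ext z; simp [Metric.mem_ball, dist_zero_right]
    rw [this]; exact Metric.isOpen_ball.measurableSet
  calc ∫⁻ z in {z : EuclideanSpace ℝ (Fin n) | ‖z‖ < R},
        ENNReal.ofReal ‖(φ (d (x + z) / ε) - φ ((d x + (inner ℝ (gradient d x) z : ℝ)) / ε))
          * ‖z‖ ^ (-((n : ℝ) + 2*s))‖
      ≤ ∫⁻ z in {z : EuclideanSpace ℝ (Fin n) | ‖z‖ < R}, ENNReal.ofReal (A * ‖z‖ ^ q) :=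
        setLIntegral_mono' hmeas (fun z hz => ENNReal.ofReal_le_ofReal (hpt z hz))
    _ = ENNReal.ofReal A * ∫⁻ z in {z : EuclideanSpace ℝ (Fin n) | ‖z‖ < R},
          ENNReal.ofReal (‖z‖ ^ q) := by
        simp_rw [ENNReal.ofReal_mul hApos.le]
        exact lintegral_const_mul' _ _ ENNReal.ofReal_ne_top
    _ ≤ ENNReal.ofReal A * ENNReal.ofReal (R ^ ((n:ℝ) + q) * (2 ^ ((n:ℝ) - q) * Vb *
          (1 - 2 ^ (-((n:ℝ) + q)))⁻¹)) :=
        mul_le_mul_right (lint_ball_rpow n (by omega) q R hq hnq hRpos) _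
    _ ≤ ENNReal.ofReal (C₀^2 * 2 ^ ((1:ℝ)+2*s) * (c ^ ((n:ℝ)+q) *
          (2 ^ ((n:ℝ) - q) * Vb * (1 - 2 ^ (-((n:ℝ) + q)))⁻¹)) * ρ ^ (1 - 4*s) * ε ^ (2*s)) := by
        rw [← ENNReal.ofReal_mul hApos.le]
        apply ENNReal.ofReal_le_ofReal
        apply le_of_eq
        have hmerge : ρ ^ (-((1:ℝ)+2*s)) * ρ ^ ((n:ℝ)+q) = ρ ^ (1 - 4*s) := by
          rw [← Real.rpow_add hρ]
          congr 1
          rw [hqdef]; ring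
        rw [hA, hRdef, Real.mul_rpow hc.le hρ.le]
        linear_combination (C₀^2 * 2 ^ ((1:ℝ)+2*s) * ε ^ (2*s) * c ^ ((n:ℝ)+q) *
          (2 ^ ((n:ℝ) - q) * Vb * (1 - 2 ^ (-((n:ℝ) + q)))⁻¹)) * hmerge
end

section
/- Let ψ : ℝ → ℝ be a bounded Lipschitz function with |ψ(ξ)|, |ψ'(ξ)| ≤ A (1+|ξ|^{2s})^{-1}, let d : ℝ^n → ℝ be smooth with |∇d(x)| = 1 at a given point x and with globally bounded Hessian. Then, for ε, δ ∈ (0,1) with |d(x)| < δ/2 and ε/δ² ≤ 1, the quantity |∫_{ℝ^n} (ψ(d(x+εz)/ε) − ψ(d(x)/ε + ∇d(x)·z)) |z|^{-(n+2s)} dz| ≤ C A ε^s / δ^{2s}, with C depending only on n, s, and the Hessian bound. -/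
open MeasureTheory Set

open Metric Measure in
lemma lintegral_fun_norm_addHaar_aux {E : Type*} [NormedAddCommGroup E] [NormedSpace ℝ E]
    [MeasurableSpace E] [BorelSpace E] [FiniteDimensional ℝ E] [Nontrivial E]
    (μ : Measure E) [μ.IsAddHaarMeasure] (f : ℝ → ENNReal) (hf : Measurable f) :
    ∫⁻ x, f ‖x‖ ∂μ
      = μ.toSphere univ * ∫⁻ y in Ioi (0:ℝ),
          ENNReal.ofReal (y ^ (Module.finrank ℝ E - 1)) * f y := by
  have hf2 : Measurable fun p : sphere (0:E) 1 × Ioi (0:ℝ) => f p.2 :=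
    hf.comp (measurable_subtype_coe.comp measurable_snd)
  have hf1 : Measurable fun y : Ioi (0:ℝ) => f y := hf.comp measurable_subtype_coe
  calc
    ∫⁻ x, f ‖x‖ ∂μ = ∫⁻ x : ({(0:E)}ᶜ : Set E), f ‖(x : E)‖ ∂(μ.comap (↑)) := by
      rw [lintegral_subtype_comap (measurableSet_singleton _).compl fun x ↦ f ‖x‖,
        restrict_compl_singleton]
    _ = ∫⁻ p : sphere (0:E) 1 × Ioi (0:ℝ), f p.2
          ∂(μ.toSphere.prod (volumeIoiPow (Module.finrank ℝ E - 1))) := by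
      rw [← (μ.measurePreserving_homeomorphUnitSphereProd).map_eq,
        lintegral_map hf2 (Homeomorph.measurable _)]
      simp [homeomorphUnitSphereProd]
    _ = μ.toSphere univ * ∫⁻ y : Ioi (0:ℝ), f y ∂(volumeIoiPow (Module.finrank ℝ E - 1)) := by
      rw [← lintegral_map hf1 measurable_snd, Measure.map_snd_prod, lintegral_smul_measure, smul_eq_mul]
    _ = μ.toSphere univ * ∫⁻ y in Ioi (0:ℝ),
          ENNReal.ofReal (y ^ (Module.finrank ℝ E - 1)) * f y := by
      rw [volumeIoiPow, lintegral_withDensity_eq_lintegral_mul _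
        (by fun_prop) hf1]
      simp only [Pi.mul_apply]
      rw [lintegral_subtype_comap measurableSet_Ioi
        (fun y => ENNReal.ofReal (y ^ (Module.finrank ℝ E - 1)) * f y)]


/-- Let ψ be bounded Lipschitz with |ψ|, |ψ'| ≤ A(1+|ξ|^{2s})^{-1}, and
d smooth with |∇d(x)| = 1 at the given x and globally bounded Hessian (encoded by the
quadratic Taylor bound with constant K). For ε, δ ∈ (0,1) with |d(x)| < δ/2 and
ε/δ² ≤ 1,
|∫ (ψ(d(x+εz)/ε) − ψ(d(x)/ε + ∇d(x)·z)) |z|^{-(n+2s)} dz| ≤ C A ε^s/δ^{2s},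
with C depending only on n, s and the Hessian bound K. -/
theorem stmt_18 (n : ℕ) (hn : 2 ≤ n) (s : ℝ) (hs : s ∈ Set.Ioo (0 : ℝ) (1/2))
    (A K : ℝ) (hA : 0 < A) (hK : 0 < K) :
    ∃ C : ℝ, 0 < C ∧
      ∀ (ψ ψ' : ℝ → ℝ) (d : EuclideanSpace ℝ (Fin n) → ℝ)
        (x : EuclideanSpace ℝ (Fin n)) (ε δ : ℝ),
        (∀ ξ, HasDerivAt ψ (ψ' ξ) ξ) →
        (∀ ξ, |ψ ξ| ≤ A / (1 + |ξ| ^ (2*s))) →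
        (∀ ξ, |ψ' ξ| ≤ A / (1 + |ξ| ^ (2*s))) →
        ContDiff ℝ 2 d → ‖gradient d x‖ = 1 →
        (∀ y z : EuclideanSpace ℝ (Fin n),
          |d (y + z) - d y - (inner ℝ (gradient d y) z : ℝ)| ≤ K * ‖z‖^2) →
        ε ∈ Set.Ioo (0:ℝ) 1 → δ ∈ Set.Ioo (0:ℝ) 1 →
        |d x| < δ/2 → ε / δ^2 ≤ 1 →
        |∫ z : EuclideanSpace ℝ (Fin n),
            (ψ (d (x + ε • z) / ε) - ψ (d x / ε + (inner ℝ (gradient d x) z : ℝ)))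
              * ‖z‖ ^ (-((n : ℝ) + 2*s))|
          ≤ C * A * ε ^ s / δ ^ (2*s) := by
  obtain ⟨hs0, hs1⟩ := hs
  set E := EuclideanSpace ℝ (Fin n)
  have hrank : Module.finrank ℝ E = n := finrank_euclideanSpace_fin
  haveI : Nontrivial E := Module.nontrivial_of_finrank_pos (R := ℝ)
    (by rw [hrank]; omega : 0 < Module.finrank ℝ E)
  set V : ℝ := (volume (Metric.ball (0:E) 1)).toReal with hV
  have hVpos : 0 < V := ENNReal.toReal_pos (Metric.measure_ball_pos _ _ one_pos).ne'
    measure_ball_lt_top.ne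
  have h2s : 0 < 2 - 2*s := by linarith
  have hCpos : 0 < (n * V) * (K/(2-2*s) + 1/s) := by positivity
  refine ⟨(n * V) * (K/(2-2*s) + 1/s), hCpos, ?_⟩
  intro ψ ψ' d x ε δ hψd hψb hψ'b _hd _hgrad htaylor hε hδ _hdx _hεδ
  obtain ⟨hε0, hε1⟩ := hε
  obtain ⟨hδ0, hδ1⟩ := hδ
  set g : E → ℝ := fun z =>
    (ψ (d (x + ε • z) / ε) - ψ (d x / ε + (inner ℝ (gradient d x) z : ℝ)))
      * ‖z‖ ^ (-((n : ℝ) + 2*s)) with hg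
  -- ψ bounds
  have hden : ∀ ξ : ℝ, A / (1 + |ξ| ^ (2*s)) ≤ A := by
    intro ξ
    apply div_le_self hA.le
    have : (0:ℝ) ≤ |ξ| ^ (2*s) := Real.rpow_nonneg (abs_nonneg ξ) _
    linarith
  have hψA : ∀ ξ, |ψ ξ| ≤ A := fun ξ => (hψb ξ).trans (hden ξ)
  have hψ'A : ∀ ξ, |ψ' ξ| ≤ A := fun ξ => (hψ'b ξ).trans (hden ξ)
  have hlip : ∀ a b : ℝ, |ψ a - ψ b| ≤ A * |a - b| := by
    intro a b
    have := Convex.norm_image_sub_le_of_norm_hasDerivWithin_le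
      (f := ψ) (f' := ψ') (s := univ) (fun ξ _ => (hψd ξ).hasDerivWithinAt)
      (fun ξ _ => hψ'A ξ) convex_univ (mem_univ b) (mem_univ a)
    simpa [Real.norm_eq_abs] using this
  -- pointwise bound
  have hpt : ∀ z : E, |g z| ≤ A * min (K*ε*‖z‖^2) 2 * ‖z‖ ^ (-((n:ℝ)+2*s)) := by
    intro z
    have hker : (0:ℝ) ≤ ‖z‖ ^ (-((n:ℝ)+2*s)) := Real.rpow_nonneg (norm_nonneg z) _
    have h1 : |ψ (d (x + ε • z) / ε) - ψ (d x / ε + (inner ℝ (gradient d x) z : ℝ))|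
        ≤ A * min (K*ε*‖z‖^2) 2 := by
      rw [mul_min_of_nonneg _ _ hA.le]
      refine le_min ?_ ?_
      · refine (hlip _ _).trans (mul_le_mul_of_nonneg_left ?_ hA.le)
        have key : |d (x + ε • z) - d x - ε * (inner ℝ (gradient d x) z : ℝ)|
            ≤ K * (ε^2 * ‖z‖^2) := by
          have h := htaylor x (ε • z)
          rwa [real_inner_smul_right, norm_smul, Real.norm_eq_abs, abs_of_pos hε0,
            mul_pow] at h
        have hsplit : d (x + ε • z) / ε - (d x / ε + (inner ℝ (gradient d x) z : ℝ))
            = (d (x + ε • z) - d x - ε * (inner ℝ (gradient d x) z : ℝ)) / ε := by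
          field_simp
          ring
        rw [hsplit, abs_div, abs_of_pos hε0, div_le_iff₀ hε0]
        calc |d (x + ε • z) - d x - ε * (inner ℝ (gradient d x) z : ℝ)|
            ≤ K * (ε^2 * ‖z‖^2) := key
          _ = K * ε * ‖z‖^2 * ε := by ring
      · calc |ψ (d (x + ε • z) / ε) - ψ (d x / ε + (inner ℝ (gradient d x) z : ℝ))|
            ≤ |ψ (d (x + ε • z) / ε)| + |ψ (d x / ε + (inner ℝ (gradient d x) z : ℝ))| :=
              abs_sub _ _
          _ ≤ A + A := add_le_add (hψA _) (hψA _)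
          _ = A * 2 := by ring
    calc |g z| = |ψ (d (x + ε • z) / ε) - ψ (d x / ε + (inner ℝ (gradient d x) z : ℝ))|
          * ‖z‖ ^ (-((n:ℝ)+2*s)) := by
            rw [hg, abs_mul, abs_of_nonneg hker]
      _ ≤ A * min (K*ε*‖z‖^2) 2 * ‖z‖ ^ (-((n:ℝ)+2*s)) :=
            mul_le_mul_of_nonneg_right h1 hker
  -- dominating radial function
  set f : ℝ → ENNReal := fun r =>
    ENNReal.ofReal (A * min (K*ε*r^2) 2 * r ^ (-((n:ℝ)+2*s))) with hf
  have hfm : Measurable f := by fun_prop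
  set R : ℝ := ε ^ (-(1/2) : ℝ) with hRdef
  have hR0 : 0 < R := Real.rpow_pos_of_pos hε0 _
  -- the 1-D estimate
  set B : ℝ := A * ε ^ s * (K/(2-2*s) + 1/s) with hB
  have hεs : 0 < ε ^ s := Real.rpow_pos_of_pos hε0 _
  have hBpos : 0 < B := by positivity
  have hpow1 : ε * R ^ (2-2*s) = ε ^ s := by
    have h1 : R ^ (2-2*s) = ε ^ (s-1) := by
      rw [hRdef, ← Real.rpow_mul hε0.le]
      congr 1
      ring
    rw [h1]
    nth_rewrite 1 [← Real.rpow_one ε]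
    rw [← Real.rpow_add hε0]
    congr 1
    ring
  have hpow2 : R ^ (-(2*s)) = ε ^ s := by
    rw [hRdef, ← Real.rpow_mul hε0.le]
    congr 1
    ring
  have h1d : (∫⁻ y in Ioi (0:ℝ), ENNReal.ofReal (y ^ (n - 1)) * f y)
      ≤ ENNReal.ofReal B := by
    rw [← Ioc_union_Ioi_eq_Ioi hR0.le,
      lintegral_union measurableSet_Ioi Ioc_disjoint_Ioi_same]
    have hpiece1 : (∫⁻ y in Ioc (0:ℝ) R, ENNReal.ofReal (y ^ (n - 1)) * f y)
        ≤ ENNReal.ofReal (A * K * (ε ^ s / (2-2*s))) := by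
      have hmono : ∀ y ∈ Ioc (0:ℝ) R, ENNReal.ofReal (y ^ (n - 1)) * f y
          ≤ ENNReal.ofReal (A * K * ε * y ^ (1-2*s)) := by
        intro y hy
        have hy0 : 0 < y := hy.1
        rw [hf, ← ENNReal.ofReal_mul (by positivity)]
        apply ENNReal.ofReal_le_ofReal
        have hnat : (y:ℝ)^(n-1) = y ^ ((n:ℝ)-1) := by
          rw [← Real.rpow_natCast y (n-1), Nat.cast_sub (by omega), Nat.cast_one]
        have hmul : y ^ ((n:ℝ)-1) * y ^ (2:ℝ) * y ^ (-((n:ℝ)+2*s)) = y ^ (1-2*s) := by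
          rw [← Real.rpow_add hy0, ← Real.rpow_add hy0]
          congr 1
          ring
        calc y^(n-1) * (A * min (K*ε*y^2) 2 * y ^ (-((n:ℝ)+2*s)))
            ≤ y^(n-1) * (A * (K*ε*y^2) * y ^ (-((n:ℝ)+2*s))) := by
              apply mul_le_mul_of_nonneg_left _ (by positivity)
              apply mul_le_mul_of_nonneg_right _ (Real.rpow_nonneg hy0.le _)
              exact mul_le_mul_of_nonneg_left (min_le_left _ _) hA.le
          _ = A * K * ε * (y ^ ((n:ℝ)-1) * y ^ (2:ℝ) * y ^ (-((n:ℝ)+2*s))) := by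
              rw [hnat, show (y:ℝ)^(2:ℕ) = y ^ (2:ℝ) by
                rw [← Real.rpow_natCast y 2]; norm_num]
              ring
          _ = A * K * ε * y ^ (1-2*s) := by rw [hmul]
      refine (setLIntegral_mono (by fun_prop) hmono).trans ?_
      have hint : IntegrableOn (fun y : ℝ => A * K * ε * y ^ (1-2*s)) (Ioc 0 R) := by
        exact ((intervalIntegral.intervalIntegrable_rpow' (by linarith)).1).const_mul _
      rw [← ofReal_integral_eq_lintegral_ofReal hint]
      · apply ENNReal.ofReal_le_ofReal
        rw [MeasureTheory.integral_const_mul, ← intervalIntegral.integral_of_le hR0.le,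
          integral_rpow (Or.inl (by linarith))]
        rw [Real.zero_rpow (by linarith : (1:ℝ)-2*s+1 ≠ 0)]
        have : (1:ℝ)-2*s+1 = 2-2*s := by ring
        rw [this, sub_zero]
        rw [show A * K * ε * (R ^ (2-2*s) / (2-2*s)) = A * K * ((ε * R ^ (2-2*s)) / (2-2*s)) by ring,
          hpow1]
      · filter_upwards [ae_restrict_mem measurableSet_Ioc] with y hy
        have : (0:ℝ) ≤ y ^ (1-2*s) := Real.rpow_nonneg hy.1.le _
        positivity
    have hpiece2 : (∫⁻ y in Ioi R, ENNReal.ofReal (y ^ (n - 1)) * f y)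
        ≤ ENNReal.ofReal (A * (ε ^ s / s)) := by
      have hmono : ∀ y ∈ Ioi R, ENNReal.ofReal (y ^ (n - 1)) * f y
          ≤ ENNReal.ofReal (2 * A * y ^ (-1-2*s)) := by
        intro y hy
        have hy0 : 0 < y := hR0.trans hy
        rw [hf, ← ENNReal.ofReal_mul (by positivity)]
        apply ENNReal.ofReal_le_ofReal
        have hnat : (y:ℝ)^(n-1) = y ^ ((n:ℝ)-1) := by
          rw [← Real.rpow_natCast y (n-1), Nat.cast_sub (by omega), Nat.cast_one]
        have hmul : y ^ ((n:ℝ)-1) * y ^ (-((n:ℝ)+2*s)) = y ^ (-1-2*s) := by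
          rw [← Real.rpow_add hy0]
          congr 1
          ring
        calc y^(n-1) * (A * min (K*ε*y^2) 2 * y ^ (-((n:ℝ)+2*s)))
            ≤ y^(n-1) * (A * 2 * y ^ (-((n:ℝ)+2*s))) := by
              apply mul_le_mul_of_nonneg_left _ (by positivity)
              apply mul_le_mul_of_nonneg_right _ (Real.rpow_nonneg hy0.le _)
              exact mul_le_mul_of_nonneg_left (min_le_right _ _) hA.le
          _ = 2 * A * (y ^ ((n:ℝ)-1) * y ^ (-((n:ℝ)+2*s))) := by rw [hnat]; ring
          _ = 2 * A * y ^ (-1-2*s) := by rw [hmul]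
      refine (setLIntegral_mono (by fun_prop) hmono).trans ?_
      have hint : IntegrableOn (fun y : ℝ => 2 * A * y ^ (-1-2*s)) (Ioi R) :=
        (integrableOn_Ioi_rpow_of_lt (by linarith) hR0).const_mul _
      rw [← ofReal_integral_eq_lintegral_ofReal hint]
      · apply ENNReal.ofReal_le_ofReal
        rw [MeasureTheory.integral_const_mul, integral_Ioi_rpow_of_lt (by linarith) hR0]
        have he : (-1:ℝ)-2*s+1 = -(2*s) := by ring
        rw [he, hpow2]
        rw [show 2 * A * (-ε ^ s / -(2*s)) = A * (ε ^ s / s) by field_simp]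
      · filter_upwards [ae_restrict_mem measurableSet_Ioi] with y hy
        have hy0 : 0 < y := hR0.trans hy
        have : (0:ℝ) ≤ y ^ (-1-2*s) := Real.rpow_nonneg hy0.le _
        positivity
    calc (∫⁻ y in Ioc (0:ℝ) R, ENNReal.ofReal (y ^ (n - 1)) * f y)
          + ∫⁻ y in Ioi R, ENNReal.ofReal (y ^ (n - 1)) * f y
        ≤ ENNReal.ofReal (A * K * (ε ^ s / (2-2*s))) + ENNReal.ofReal (A * (ε ^ s / s)) :=
          add_le_add hpiece1 hpiece2
      _ = ENNReal.ofReal B := by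
          rw [← ENNReal.ofReal_add (by positivity) (by positivity)]
          congr 1
          rw [hB]
          field_simp
  -- main estimate
  have hmain : |∫ z : E, g z| ≤ (n * V) * B := by
    have hstep1 : |∫ z : E, g z| ≤ (∫⁻ z : E, ENNReal.ofReal ‖g z‖).toReal := by
      simpa [Real.norm_eq_abs] using norm_integral_le_lintegral_norm g
    have hstep2 : (∫⁻ z : E, ENNReal.ofReal ‖g z‖) ≤ ∫⁻ z : E, f ‖z‖ := by
      apply lintegral_mono
      intro z
      apply ENNReal.ofReal_le_ofReal
      rw [Real.norm_eq_abs]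
      exact hpt z
    have hstep3 : (∫⁻ z : E, f ‖z‖)
        ≤ (volume : Measure E).toSphere univ * ENNReal.ofReal B := by
      rw [lintegral_fun_norm_addHaar_aux (volume : Measure E) f hfm, hrank]
      exact mul_le_mul_right h1d _
    have hne : (volume : Measure E).toSphere univ * ENNReal.ofReal B ≠ ⊤ :=
      ENNReal.mul_ne_top (measure_ne_top _ _) ENNReal.ofReal_ne_top
    calc |∫ z : E, g z| ≤ (∫⁻ z : E, ENNReal.ofReal ‖g z‖).toReal := hstep1
      _ ≤ ((volume : Measure E).toSphere univ * ENNReal.ofReal B).toReal :=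
          ENNReal.toReal_mono hne (hstep2.trans hstep3)
      _ = (n * V) * B := by
          rw [Measure.toSphere_apply_univ, hrank, ENNReal.toReal_mul, ENNReal.toReal_mul,
            ENNReal.toReal_natCast, ENNReal.toReal_ofReal hBpos.le]
  -- conclude
  have hfinal : (n * V) * B = ((n * V) * (K/(2-2*s) + 1/s)) * A * ε ^ s := by
    rw [hB]; ring
  have hδs : δ ^ (2*s) ≤ 1 := Real.rpow_le_one hδ0.le hδ1.le (by positivity)
  have hδs0 : 0 < δ ^ (2*s) := Real.rpow_pos_of_pos hδ0 _
  calc |∫ z : E, g z| ≤ ((n * V) * (K/(2-2*s) + 1/s)) * A * ε ^ s := by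
        rw [← hfinal]; exact hmain
    _ ≤ ((n * V) * (K/(2-2*s) + 1/s)) * A * ε ^ s / δ ^ (2*s) :=
        le_div_self (by positivity) hδs0 hδs
end
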